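/- arXiv:2212.07819 — 5 statements merged into one kernel-verified Lean document; each statement's English description precedes it below -/
import Mathlib

section
/- Let F be a field with at least 4 elements, χ : F^× → {±1} a group homomorphism with χ(−1) = 1, and ℓ ∈ F with ℓ ∉ {0, 1}. (a) If χ(ℓ) = 1 and χ(1 − ℓ) = −1, then [a] = [ℓ·a] in RP₊(F)[1/2]_χ for all a ∈ F^×. (b) If χ(ℓ) = −1 and χ(1 − ℓ) = −1, then [a] = [(1 − ℓ⁻¹)·a] in RP₊(F)[1/2]_χ for all a ∈ F^×. -/
noncomputable section

open Polynomial

/-- The ring `ℤ[1/2]`, realized as the subring of `ℚ` generated by `1/2`. -/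
def ZhalfSub : Subring ℚ := Subring.closure {(2 : ℚ)⁻¹}

abbrev Zhalf : Type := ZhalfSub

variable (F : Type) [Field F]

/-- The generator `[u]` of the free `ℤ[1/2]`-module on `Fˣ`. -/
def rpGen (u : Fˣ) : Fˣ →₀ Zhalf := Finsupp.single u 1

/-- The defining relations of `RP₊(F)[1/2]_χ`: (i) `[1] = 0`; (ii) the twisted five-term
relations; (iii) `χ(−1)·[x] = [x]`; (iv) `[x] = −[x⁻¹]`. -/
def rpRels (χ : Fˣ →* ℤˣ) : Set (Fˣ →₀ Zhalf) :=
  {v | v = rpGen F 1} ∪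
  {v | ∃ (x y : F) (hx0 : x ≠ 0) (hx1 : x ≠ 1) (hy0 : y ≠ 0) (hy1 : y ≠ 1) (_ : x ≠ y),
      v = rpGen F (Units.mk0 x hx0) - rpGen F (Units.mk0 y hy0)
        + ((χ (Units.mk0 x hx0) : ℤ) : Zhalf) •
            rpGen F (Units.mk0 (y / x) (div_ne_zero hy0 hx0))
        - ((χ (Units.mk0 (x⁻¹ - 1)
              (sub_ne_zero.mpr (fun h => hx1 (inv_eq_one.mp h)))) : ℤ) : Zhalf) •
            rpGen F (Units.mk0 ((1 - x⁻¹) / (1 - y⁻¹))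
              (div_ne_zero (sub_ne_zero.mpr (fun h => hx1 (inv_eq_one.mp h.symm)))
                (sub_ne_zero.mpr (fun h => hy1 (inv_eq_one.mp h.symm)))))
        + ((χ (Units.mk0 (1 - x) (sub_ne_zero.mpr (Ne.symm hx1))) : ℤ) : Zhalf) •
            rpGen F (Units.mk0 ((1 - x) / (1 - y))
              (div_ne_zero (sub_ne_zero.mpr (Ne.symm hx1)) (sub_ne_zero.mpr (Ne.symm hy1))))} ∪
  {v | ∃ u : Fˣ, v = ((χ (-1) : ℤ) : Zhalf) • rpGen F u - rpGen F u} ∪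
  {v | ∃ u : Fˣ, v = rpGen F u + rpGen F u⁻¹}

/-- The submodule of relations. -/
def rpSub (χ : Fˣ →* ℤˣ) : Submodule Zhalf (Fˣ →₀ Zhalf) :=
  Submodule.span Zhalf (rpRels F χ)

/-- The `ℤ[1/2]`-module `RP₊(F)[1/2]_χ`. -/
def RPplus (χ : Fˣ →* ℤˣ) : Type :=
  (Fˣ →₀ Zhalf) ⧸ rpSub F χ

instance (χ : Fˣ →* ℤˣ) : AddCommGroup (RPplus F χ) :=
  inferInstanceAs (AddCommGroup ((Fˣ →₀ Zhalf) ⧸ rpSub F χ))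

instance (χ : Fˣ →* ℤˣ) : Module Zhalf (RPplus F χ) :=
  inferInstanceAs (Module Zhalf ((Fˣ →₀ Zhalf) ⧸ rpSub F χ))

/-- The class `[u]` of `u ∈ F^×` in `RP₊(F)[1/2]_χ`. -/
def rpCls (χ : Fˣ →* ℤˣ) (u : Fˣ) : RPplus F χ :=
  Submodule.Quotient.mk (rpGen F u)

end

set_option maxHeartbeats 1000000
set_option synthInstance.maxHeartbeats 400000

noncomputable section Work
open scoped Classical
variable {F : Type} [Field F] (χ : Fˣ →* ℤˣ)

def half : Zhalf := ⟨(2:ℚ)⁻¹, Subring.subset_closure rfl⟩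

lemma half_add_half : half + half = 1 := by
  apply Subtype.ext
  have h1 : ((half + half : Zhalf) : ℚ) = (2:ℚ)⁻¹ + (2:ℚ)⁻¹ := rfl
  rw [h1]
  norm_num

lemma halve {χ : Fˣ →* ℤˣ} (v : RPplus F χ) (h : v + v = 0) : v = 0 := by
  have h2 : half • (v + v) = (0 : RPplus F χ) := by rw [h, smul_zero]
  rw [smul_add, ← add_smul, half_add_half, one_smul] at h2
  exact h2

def cls (x : F) : RPplus F χ := if h : x = 0 then 0 else rpCls F χ (Units.mk0 x h)
def sgn (x : F) : ℤˣ := if h : x = 0 then 1 else χ (Units.mk0 x h)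
def sm {χ : Fˣ →* ℤˣ} (ε : ℤˣ) (v : RPplus F χ) : RPplus F χ := ((ε : ℤ) : Zhalf) • v

lemma cls_def {x : F} (h : x ≠ 0) : cls χ x = rpCls F χ (Units.mk0 x h) := by
  unfold cls; exact dif_neg h
lemma sgn_def {x : F} (h : x ≠ 0) : sgn χ x = χ (Units.mk0 x h) := by
  unfold sgn; exact dif_neg h

lemma rpCls_eq (u : Fˣ) : rpCls F χ u = (Submodule.Quotient.mk (rpGen F u) : RPplus F χ) := rfl

@[simp] lemma sm_one (v : RPplus F χ) : sm 1 v = v := by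
  unfold sm; norm_num
@[simp] lemma sm_neg_one (v : RPplus F χ) : sm (-1) v = -v := by
  unfold sm; norm_num
@[simp] lemma sm_neg (ε : ℤˣ) (v : RPplus F χ) : sm ε (-v) = -(sm ε v) := by
  unfold sm; exact smul_neg _ _
@[simp] lemma sm_zero (ε : ℤˣ) : sm ε (0 : RPplus F χ) = 0 := by
  unfold sm; exact smul_zero _

lemma mk_rel {v : Fˣ →₀ Zhalf} (hv : v ∈ rpRels F χ) :
    (Submodule.Quotient.mk v : RPplus F χ) = 0 :=
  (Submodule.Quotient.mk_eq_zero _).mpr (Submodule.subset_span hv)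

lemma cls_one : cls χ (1 : F) = 0 := by
  rw [cls_def χ (one_ne_zero)]
  have h1 : Units.mk0 (1:F) one_ne_zero = 1 := Units.mk0_one _
  rw [h1]
  exact mk_rel χ (Or.inl (Or.inl (Or.inl rfl)))

lemma cls_inv {x : F} (hx : x ≠ 0) : cls χ x⁻¹ = -(cls χ x) := by
  rw [cls_def χ (inv_ne_zero hx), cls_def χ hx]
  have hu : Units.mk0 x⁻¹ (inv_ne_zero hx) = (Units.mk0 x hx)⁻¹ := by
    apply Units.ext
    simp
  rw [hu, rpCls_eq, rpCls_eq]
  have h := mk_rel χ (v := rpGen F (Units.mk0 x hx) + rpGen F (Units.mk0 x hx)⁻¹)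
    (Or.inr ⟨Units.mk0 x hx, rfl⟩)
  rw [Submodule.Quotient.mk_add] at h
  exact eq_neg_of_add_eq_zero_left ((add_comm _ _).trans h)

lemma cls_neg_one : cls χ (-1 : F) = 0 := by
  apply halve
  nth_rewrite 2 [show (-1 : F) = (-1 : F)⁻¹ by norm_num]
  rw [cls_inv χ (by norm_num : (-1:F) ≠ 0)]
  abel

lemma sgn_mul {x y : F} (hx : x ≠ 0) (hy : y ≠ 0) :
    sgn χ (x*y) = sgn χ x * sgn χ y := by
  rw [sgn_def χ (mul_ne_zero hx hy), sgn_def χ hx, sgn_def χ hy,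
    show Units.mk0 (x*y) (mul_ne_zero hx hy) = Units.mk0 x hx * Units.mk0 y hy from
      Units.ext rfl, map_mul]

lemma sgn_inv {x : F} (hx : x ≠ 0) : sgn χ x⁻¹ = sgn χ x := by
  rw [sgn_def χ (inv_ne_zero hx), sgn_def χ hx,
    show Units.mk0 x⁻¹ (inv_ne_zero hx) = (Units.mk0 x hx)⁻¹ from Units.ext (by simp),
    map_inv]
  rcases Int.units_eq_one_or (χ (Units.mk0 x hx)) with h | h <;> rw [h] <;> decide

lemma sgn_div {x y : F} (hx : x ≠ 0) (hy : y ≠ 0) :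
    sgn χ (x/y) = sgn χ x * sgn χ y := by
  rw [div_eq_mul_inv, sgn_mul χ hx (inv_ne_zero hy), sgn_inv χ hy]

lemma sgn_sq {x : F} (hx : x ≠ 0) : sgn χ x * sgn χ x = 1 := Int.units_mul_self _

section withneg
variable (hneg : χ (-1) = 1)
include hneg

lemma sgn_neg_one : sgn χ (-1 : F) = 1 := by
  rw [sgn_def χ (by norm_num : (-1:F) ≠ 0),
    show Units.mk0 (-1 : F) (by norm_num) = (-1 : Fˣ) from Units.ext (by simp), hneg]

lemma sgn_neg {x : F} (hx : x ≠ 0) : sgn χ (-x) = sgn χ x := by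
  have h1 : sgn χ (-1 : F) = 1 := sgn_neg_one χ hneg
  rw [show -x = -1 * x by ring, sgn_mul χ (by norm_num) hx]
  rw [h1, one_mul]

end withneg

lemma sgn_aux {x : F} (hx0 : x ≠ 0) (hx1 : x ≠ 1) :
    sgn χ (x⁻¹ - 1) = sgn χ (1-x) * sgn χ x := by
  rw [show x⁻¹ - 1 = (1-x)/x by
    rw [eq_div_iff hx0, sub_mul, inv_mul_cancel₀ hx0, one_mul],
    sgn_div χ (sub_ne_zero.mpr (Ne.symm hx1)) hx0]

lemma R5 (x y : F) (hx0 : x ≠ 0) (hx1 : x ≠ 1) (hy0 : y ≠ 0) (hy1 : y ≠ 1) (hxy : x ≠ y) :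
    cls χ x - cls χ y + sm (sgn χ x) (cls χ (y/x))
      - sm (sgn χ (x⁻¹ - 1)) (cls χ ((1 - x⁻¹)/(1 - y⁻¹)))
      + sm (sgn χ (1 - x)) (cls χ ((1 - x)/(1 - y))) = 0 := by
  have hyx0 : y/x ≠ 0 := div_ne_zero hy0 hx0
  have hxi1 : x⁻¹ - 1 ≠ 0 := sub_ne_zero.mpr (fun h => hx1 (inv_eq_one.mp h))
  have hA0 : (1 - x⁻¹)/(1 - y⁻¹) ≠ 0 :=
    div_ne_zero (sub_ne_zero.mpr (fun h => hx1 (inv_eq_one.mp h.symm)))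
      (sub_ne_zero.mpr (fun h => hy1 (inv_eq_one.mp h.symm)))
  have hB0 : (1 - x)/(1 - y) ≠ 0 :=
    div_ne_zero (sub_ne_zero.mpr (Ne.symm hx1)) (sub_ne_zero.mpr (Ne.symm hy1))
  have h := mk_rel χ (v := rpGen F (Units.mk0 x hx0) - rpGen F (Units.mk0 y hy0)
        + ((χ (Units.mk0 x hx0) : ℤ) : Zhalf) •
            rpGen F (Units.mk0 (y / x) (div_ne_zero hy0 hx0))
        - ((χ (Units.mk0 (x⁻¹ - 1)
              (sub_ne_zero.mpr (fun h => hx1 (inv_eq_one.mp h)))) : ℤ) : Zhalf) •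
            rpGen F (Units.mk0 ((1 - x⁻¹) / (1 - y⁻¹))
              (div_ne_zero (sub_ne_zero.mpr (fun h => hx1 (inv_eq_one.mp h.symm)))
                (sub_ne_zero.mpr (fun h => hy1 (inv_eq_one.mp h.symm)))))
        + ((χ (Units.mk0 (1 - x) (sub_ne_zero.mpr (Ne.symm hx1))) : ℤ) : Zhalf) •
            rpGen F (Units.mk0 ((1 - x) / (1 - y))
              (div_ne_zero (sub_ne_zero.mpr (Ne.symm hx1)) (sub_ne_zero.mpr (Ne.symm hy1)))))
    (Or.inl (Or.inl (Or.inr ⟨x, y, hx0, hx1, hy0, hy1, hxy, rfl⟩)))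
  rw [cls_def χ hx0, cls_def χ hy0, cls_def χ hyx0, cls_def χ hA0, cls_def χ hB0,
    sgn_def χ hx0, sgn_def χ hxi1, sgn_def χ (sub_ne_zero.mpr (Ne.symm hx1))]
  unfold sm
  rw [rpCls_eq, rpCls_eq, rpCls_eq, rpCls_eq, rpCls_eq]
  simp only [Submodule.Quotient.mk_add, Submodule.Quotient.mk_sub,
    Submodule.Quotient.mk_smul] at h
  exact h

lemma D1 (x y : F) (hx0 : x ≠ 0) (hx1 : x ≠ 1) (hy0 : y ≠ 0) (hy1 : y ≠ 1) (hxy : x ≠ y)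
    (hexy : sgn χ x = sgn χ y) (hsgn : sgn χ (1-x) = -(sgn χ (1-y))) :
    cls χ x - cls χ y + sm (sgn χ x) (cls χ (y/x)) = 0 := by
  have hyx0 : y/x ≠ 0 := div_ne_zero hy0 hx0
  have hA0 : (1 - x⁻¹)/(1 - y⁻¹) ≠ 0 :=
    div_ne_zero (sub_ne_zero.mpr (fun h => hx1 (inv_eq_one.mp h.symm)))
      (sub_ne_zero.mpr (fun h => hy1 (inv_eq_one.mp h.symm)))
  have hB0 : (1 - x)/(1 - y) ≠ 0 :=
    div_ne_zero (sub_ne_zero.mpr (Ne.symm hx1)) (sub_ne_zero.mpr (Ne.symm hy1))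
  have h1 := R5 χ x y hx0 hx1 hy0 hy1 hxy
  have h2 := R5 χ y x hy0 hy1 hx0 hx1 (Ne.symm hxy)
  rw [show x/y = (y/x)⁻¹ from (inv_div y x).symm,
    show (1-y⁻¹)/(1-x⁻¹) = ((1-x⁻¹)/(1-y⁻¹))⁻¹ from (inv_div _ _).symm,
    show (1-y)/(1-x) = ((1-x)/(1-y))⁻¹ from (inv_div _ _).symm,
    cls_inv χ hyx0, cls_inv χ hA0, cls_inv χ hB0,
    sgn_aux χ hy0 hy1, show sgn χ (1-y) = -(sgn χ (1-x)) by rw [hsgn, neg_neg],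
    ← hexy] at h2
  rw [sgn_aux χ hx0 hx1] at h1
  rcases Int.units_eq_one_or (sgn χ x) with hc | hc <;>
    rcases Int.units_eq_one_or (sgn χ (1-x)) with hs | hs <;>
    rw [hc, hs] at h1 h2 <;> rw [hc] <;>
    simp only [mul_one, one_mul, mul_neg, neg_mul, neg_neg, sm_one, sm_neg_one, sm_neg,
      sub_neg_eq_add, neg_sub] at h1 h2 ⊢ <;>
  · apply halve
    linear_combination (norm := module) h1 - h2

lemma D2 (x y : F) (hx0 : x ≠ 0) (hx1 : x ≠ 1) (hy0 : y ≠ 0) (hy1 : y ≠ 1) (hxy : x ≠ y)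
    (hexy : sgn χ x = sgn χ y) (hsgn : sgn χ (1-x) = -(sgn χ (1-y))) :
    cls χ ((1-x)/(1-y)) = sm (sgn χ x) (cls χ ((1-x⁻¹)/(1-y⁻¹))) := by
  have hyx0 : y/x ≠ 0 := div_ne_zero hy0 hx0
  have hA0 : (1 - x⁻¹)/(1 - y⁻¹) ≠ 0 :=
    div_ne_zero (sub_ne_zero.mpr (fun h => hx1 (inv_eq_one.mp h.symm)))
      (sub_ne_zero.mpr (fun h => hy1 (inv_eq_one.mp h.symm)))
  have hB0 : (1 - x)/(1 - y) ≠ 0 :=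
    div_ne_zero (sub_ne_zero.mpr (Ne.symm hx1)) (sub_ne_zero.mpr (Ne.symm hy1))
  have h1 := R5 χ x y hx0 hx1 hy0 hy1 hxy
  have h2 := R5 χ y x hy0 hy1 hx0 hx1 (Ne.symm hxy)
  rw [show x/y = (y/x)⁻¹ from (inv_div y x).symm,
    show (1-y⁻¹)/(1-x⁻¹) = ((1-x⁻¹)/(1-y⁻¹))⁻¹ from (inv_div _ _).symm,
    show (1-y)/(1-x) = ((1-x)/(1-y))⁻¹ from (inv_div _ _).symm,
    cls_inv χ hyx0, cls_inv χ hA0, cls_inv χ hB0,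
    sgn_aux χ hy0 hy1, show sgn χ (1-y) = -(sgn χ (1-x)) by rw [hsgn, neg_neg],
    ← hexy] at h2
  rw [sgn_aux χ hx0 hx1] at h1
  rcases Int.units_eq_one_or (sgn χ x) with hc | hc <;>
    rcases Int.units_eq_one_or (sgn χ (1-x)) with hs | hs <;>
    rw [hc, hs] at h1 h2 <;> rw [hc] <;>
    simp only [mul_one, one_mul, mul_neg, neg_mul, neg_neg, sm_one, sm_neg_one, sm_neg,
      sub_neg_eq_add, neg_sub] at h1 h2 ⊢ <;>
  · rw [← sub_eq_zero]
    apply halve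
    first
    | linear_combination (norm := module) h1 + h2
    | linear_combination (norm := module) - h1 - h2

lemma Rinv (x : F) (hx0 : x ≠ 0) (hx1 : x ≠ 1) (hxm : x ≠ -1) (hex : sgn χ x = 1) :
    cls χ x + cls χ x - cls χ (x*x)
      + sm (sgn χ (1-x)) (cls χ (-x)) + sm (sgn χ (1-x)) (cls χ (-x)) = 0 := by
  have hxx1 : x*x ≠ 1 := fun h => by
    rcases mul_self_eq_one_iff.mp h with h | h
    exacts [hx1 h, hxm h]
  have hxi : x ≠ x⁻¹ := by
    intro h
    have h2 : x*x = x*x⁻¹ := by rw [← h]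
    rw [mul_inv_cancel₀ hx0] at h2
    exact hxx1 h2
  have h1x : (1:F) - x ≠ 0 := sub_ne_zero.mpr (Ne.symm hx1)
  have h := R5 χ x x⁻¹ hx0 hx1 (inv_ne_zero hx0) (fun hh => hx1 (inv_eq_one.mp hh)) hxi
  rw [inv_inv] at h
  rw [show x⁻¹/x = (x*x)⁻¹ by rw [div_eq_mul_inv, ← mul_inv],
    show (1-x⁻¹)/(1-x) = (-x)⁻¹ by
      rw [div_eq_iff h1x, inv_neg, show (1:F) - x⁻¹ = x⁻¹ * (x - 1) by
        rw [mul_sub, inv_mul_cancel₀ hx0]; ring]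
      ring,
    show (1-x)/(1-x⁻¹) = -x by
      have h1xi : (1:F) - x⁻¹ ≠ 0 := sub_ne_zero.mpr (fun h => hx1 (inv_eq_one.mp h.symm))
      rw [div_eq_iff h1xi, show (1:F) - x⁻¹ = x⁻¹ * (x - 1) by
        rw [mul_sub, inv_mul_cancel₀ hx0]; ring, ← mul_assoc,
        show -x * x⁻¹ = -1 by rw [neg_mul, mul_inv_cancel₀ hx0]]
      ring,
    cls_inv χ (mul_ne_zero hx0 hx0), cls_inv χ (neg_ne_zero.mpr hx0), cls_inv χ hx0,
    sgn_aux χ hx0 hx1, hex, mul_one] at h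
  simp only [sm_one, sm_neg, sub_neg_eq_add] at h
  linear_combination (norm := module) h


section Main
variable (hneg : χ (-1) = 1)
include hneg

lemma Cl0 (ℓ : F) (hl0 : ℓ ≠ 0) (hl1 : ℓ ≠ 1)
    (hel : sgn χ ℓ = 1) (hes : sgn χ (1-ℓ) = -1) : cls χ ℓ = 0 := by
  by_cases hm : ℓ = -1
  · rw [hm]; exact cls_neg_one χ
  · have hlm : ℓ ≠ -1 := hm
    have hml1 : -ℓ ≠ 1 := fun h => hlm (neg_eq_iff_eq_neg.mp h)
    have hmlm : -ℓ ≠ -1 := fun h => hl1 (neg_injective h)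
    have h1l : (1:F) - ℓ ≠ 0 := sub_ne_zero.mpr (Ne.symm hl1)
    have h1pl : (1:F) + ℓ ≠ 0 := fun h => hlm (eq_neg_of_add_eq_zero_right h)
    have hll0 : ℓ*ℓ ≠ 0 := mul_ne_zero hl0 hl0
    have hll1 : ℓ*ℓ ≠ 1 := fun h => by
      rcases mul_self_eq_one_iff.mp h with h | h
      exacts [hl1 h, hlm h]
    have E1 := Rinv χ ℓ hl0 hl1 hlm hel
    rw [hes] at E1
    simp only [sm_neg_one] at E1
    have E2 := Rinv χ (-ℓ) (neg_ne_zero.mpr hl0) hml1 hmlm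
      (by rw [sgn_neg χ hneg hl0]; exact hel)
    rw [neg_mul_neg, neg_neg, sub_neg_eq_add] at E2
    rcases Int.units_eq_one_or (sgn χ (1+ℓ)) with ht | ht <;> rw [ht] at E2 <;>
      simp only [sm_one, sm_neg_one] at E2
    · -- t = 1
      have hnn : ℓ ≠ -ℓ := by
        intro h
        have h2 : (1:F) + ℓ = 1 - ℓ := by rw [sub_eq_add_neg, ← h]
        rw [h2, hes] at ht
        exact absurd ht (by decide)
      have hd := D1 χ ℓ (-ℓ) hl0 hl1 (neg_ne_zero.mpr hl0) hml1 hnn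
        ((sgn_neg χ hneg hl0).symm) (by rw [sub_neg_eq_add, ht, hes])
      rw [hel, show -ℓ/ℓ = (-1 : F) by rw [neg_div, div_self hl0], cls_neg_one χ,
        sm_one, add_zero] at hd
      apply halve
      apply halve
      linear_combination (norm := module) E2 - E1 + hd + hd + hd + hd
    · -- t = -1
      have hQ : cls χ (ℓ*ℓ) = 0 := by
        apply halve
        linear_combination (norm := module) - E1 - E2
      have hsll : sgn χ (ℓ*ℓ) = 1 := by rw [sgn_mul χ hl0 hl0, hel]; decide
      have hd := D1 χ (ℓ*ℓ) ℓ hll0 hll1 hl0 hl1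
        (fun h => hl1 (mul_left_cancel₀ hl0 (h.trans (mul_one ℓ).symm)))
        (by rw [hsll, hel])
        (by rw [show (1:F) - ℓ*ℓ = (1-ℓ)*(1+ℓ) by ring, sgn_mul χ h1l h1pl, hes, ht]; decide)
      rw [hsll, show ℓ/(ℓ*ℓ) = ℓ⁻¹ by
          rw [div_eq_iff hll0, ← mul_assoc, inv_mul_cancel₀ hl0, one_mul],
        cls_inv χ hl0, sm_one] at hd
      apply halve
      linear_combination (norm := module) hQ - hd

lemma key (ℓ : F) (hl0 : ℓ ≠ 0) (hl1 : ℓ ≠ 1)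
    (hel : sgn χ ℓ = 1) (hes : sgn χ (1-ℓ) = -1) (a : F) (ha0 : a ≠ 0) :
    cls χ a = cls χ (ℓ*a) := by
  have hCl : cls χ ℓ = 0 := Cl0 χ hneg ℓ hl0 hl1 hel hes
  by_cases ha1 : a = 1
  · rw [ha1, mul_one, cls_one χ, hCl]
  by_cases hla1 : ℓ*a = 1
  · have haeq : a = ℓ⁻¹ := eq_inv_of_mul_eq_one_left (by rw [mul_comm]; exact hla1)
    rw [hla1, haeq, cls_inv χ hl0, hCl, cls_one χ, neg_zero]
  have hla0 : ℓ*a ≠ 0 := mul_ne_zero hl0 ha0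
  have h1a : (1:F) - a ≠ 0 := sub_ne_zero.mpr (Ne.symm ha1)
  have h1la : (1:F) - ℓ*a ≠ 0 := sub_ne_zero.mpr (Ne.symm hla1)
  have h1l : (1:F) - ℓ ≠ 0 := sub_ne_zero.mpr (Ne.symm hl1)
  have hala : a ≠ ℓ*a := fun h =>
    hl1 (mul_right_cancel₀ ha0 (show ℓ * a = 1 * a by rw [one_mul, ← h]))
  have hea' : sgn χ (ℓ*a) = sgn χ a := by rw [sgn_mul χ hl0 ha0, hel, one_mul]
  rcases eq_or_ne (sgn χ (1-a)) (sgn χ (1-ℓ*a)) with hss | hss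
  · -- equal signs
    obtain ⟨B, hB⟩ : ∃ B : F, B = (1-a)/(1-ℓ*a) := ⟨_, rfl⟩
    have hB0 : B ≠ 0 := hB ▸ div_ne_zero h1a h1la
    have hB1 : B ≠ 1 := by
      intro h
      rw [hB, div_eq_one_iff_eq h1la] at h
      exact hala (by linear_combination -h)
    have hlB0 : ℓ*B ≠ 0 := mul_ne_zero hl0 hB0
    have hlB1 : ℓ*B ≠ 1 := by
      intro h
      rw [hB, ← mul_div_assoc, div_eq_one_iff_eq h1la] at h
      exact hl1 (by linear_combination h)
    have hBlB : B ≠ ℓ*B := fun h =>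
      hl1 (mul_right_cancel₀ hB0 (show ℓ * B = 1 * B by rw [one_mul, ← h]))
    have h1B : (1:F) - B ≠ 0 := sub_ne_zero.mpr (Ne.symm hB1)
    have h1lB : (1:F) - ℓ*B ≠ 0 := sub_ne_zero.mpr (Ne.symm hlB1)
    have hid1 : (1:F) - B = a*(1-ℓ)/(1-ℓ*a) := by
      rw [hB, eq_div_iff h1la, sub_mul, div_mul_cancel₀ _ h1la]; ring
    have hid2 : (1:F) - ℓ*B = (1-ℓ)/(1-ℓ*a) := by
      rw [hB, ← mul_div_assoc, eq_div_iff h1la, sub_mul, div_mul_cancel₀ _ h1la]; ring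
    have hid5 : (1-B)/(1-ℓ*B) = a := by
      rw [hid1, hid2, div_eq_iff (div_ne_zero h1l h1la), mul_div_assoc]
    have hsB : sgn χ B = 1 := by
      rw [hB, sgn_div χ h1a h1la, hss]; exact Int.units_mul_self _
    rcases Int.units_eq_one_or (sgn χ a) with hea | hea
    · -- sgn a = 1 : double five-term
      have h1 := R5 χ a (ℓ*a) ha0 ha1 hla0 hla1 hala
      have h2 := R5 χ B (ℓ*B) hB0 hB1 hlB0 hlB1 hBlB
      have hid3 : (1-a⁻¹)/(1-(ℓ*a)⁻¹) = ℓ*B := by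
        rw [hB, ← mul_div_assoc]
        rw [div_eq_div_iff (sub_ne_zero.mpr (fun hh => hla1 (inv_eq_one.mp hh.symm))) h1la]
        field_simp
        ring
      have hid4 : (1-B⁻¹)/(1-(ℓ*B)⁻¹) = ℓ*a := by
        rw [show ℓ*a = ℓ*((1-B)/(1-ℓ*B)) by rw [hid5]]
        rw [← mul_div_assoc]
        rw [div_eq_div_iff (sub_ne_zero.mpr (fun hh => hlB1 (inv_eq_one.mp hh.symm))) h1lB]
        field_simp
        ring
      have hsB1 : sgn χ (1-B) = -(sgn χ (1-a)) := by
        rw [hid1, sgn_div χ (mul_ne_zero ha0 h1l) h1la, sgn_mul χ ha0 h1l, hea, one_mul,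
          hes, ← hss, neg_one_mul]
      rw [show (ℓ*a)/a = ℓ by rw [mul_div_assoc, div_self ha0, mul_one],
        hCl, sm_zero, sgn_aux χ ha0 ha1, hea, mul_one, hid3, ← hB] at h1
      rw [show (ℓ*B)/B = ℓ by rw [mul_div_assoc, div_self hB0, mul_one],
        hCl, sm_zero, sgn_aux χ hB0 hB1, hsB, mul_one, hid4, hid5, hsB1] at h2
      rw [← sub_eq_zero]
      apply halve
      rcases Int.units_eq_one_or (sgn χ (1-a)) with hs | hs <;> rw [hs] at h1 h2 <;>
        simp only [neg_neg, sm_one, sm_neg_one, sm_neg, add_zero, sub_neg_eq_add] at h1 h2 <;>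
        first
        | linear_combination (norm := module) h1 - h2
        | linear_combination (norm := module) h1 + h2
        | linear_combination (norm := module) - h1 - h2
        | linear_combination (norm := module) h2 - h1
    · -- sgn a = -1 : star relation
      have ha1' : a - 1 ≠ 0 := sub_ne_zero.mpr ha1
      have hla1' : ℓ*a - 1 ≠ 0 := sub_ne_zero.mpr hla1
      obtain ⟨x0, hx0d⟩ : ∃ t : F, t = (a-1)/(ℓ*a-1) := ⟨_, rfl⟩
      have hx00 : x0 ≠ 0 := hx0d ▸ div_ne_zero ha1' hla1'
      have hx01 : x0 ≠ 1 := by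
        intro h
        rw [hx0d, div_eq_one_iff_eq hla1'] at h
        exact hala (by linear_combination h)
      have hlx00 : ℓ*x0 ≠ 0 := mul_ne_zero hl0 hx00
      have hlx01 : ℓ*x0 ≠ 1 := by
        intro h
        rw [hx0d, ← mul_div_assoc, div_eq_one_iff_eq hla1'] at h
        exact hl1 (by linear_combination -h)
      have hx0l : x0 ≠ ℓ*x0 := fun h =>
        hl1 (mul_right_cancel₀ hx00 (show ℓ*x0 = 1*x0 by rw [one_mul, ← h]))
      have hl1' : ℓ - 1 ≠ 0 := sub_ne_zero.mpr hl1
      have hi1 : (1:F) - x0 = a*(ℓ-1)/(ℓ*a-1) := by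
        rw [hx0d, eq_div_iff hla1', sub_mul, div_mul_cancel₀ _ hla1']; ring
      have hi2 : (1:F) - ℓ*x0 = (ℓ-1)/(ℓ*a-1) := by
        rw [hx0d, ← mul_div_assoc, eq_div_iff hla1', sub_mul, div_mul_cancel₀ _ hla1']; ring
      have hsx0 : sgn χ x0 = 1 := by
        rw [hx0d, sgn_div χ ha1' hla1', show a-1 = -(1-a) by ring,
          show ℓ*a-1 = -(1-ℓ*a) by ring, sgn_neg χ hneg h1a, sgn_neg χ hneg h1la, hss]
        exact Int.units_mul_self _
      have hexy : sgn χ x0 = sgn χ (ℓ*x0) := by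
        rw [sgn_mul χ hl0 hx00, hel, one_mul]
      have hsc : sgn χ (1-x0) = -(sgn χ (1-ℓ*x0)) := by
        rw [hi1, hi2, sgn_div χ (mul_ne_zero ha0 hl1') hla1', sgn_div χ hl1' hla1',
          sgn_mul χ ha0 hl1', hea, neg_one_mul, neg_mul]
      have hD2 := D2 χ x0 (ℓ*x0) hx00 hx01 hlx00 hlx01 hx0l hexy hsc
      have h1lx0 : (1:F) - ℓ*x0 ≠ 0 := sub_ne_zero.mpr (Ne.symm hlx01)
      have hid5' : (1-x0)/(1-ℓ*x0) = a := by
        rw [hi1, hi2, div_eq_iff (div_ne_zero hl1' hla1'), mul_div_assoc]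
      have hid4' : (1-x0⁻¹)/(1-(ℓ*x0)⁻¹) = ℓ*a := by
        rw [show ℓ*a = ℓ*((1-x0)/(1-ℓ*x0)) by rw [hid5'], ← mul_div_assoc,
          div_eq_div_iff (sub_ne_zero.mpr (fun hh => hlx01 (inv_eq_one.mp hh.symm))) h1lx0]
        field_simp
        ring
      rw [hid5', hid4', hsx0, sm_one] at hD2
      exact hD2
  · -- opposite signs
    have hopp : sgn χ (1-a) = -(sgn χ (1-ℓ*a)) := by
      rcases Int.units_eq_one_or (sgn χ (1-a)) with h | h <;>
        rcases Int.units_eq_one_or (sgn χ (1-ℓ*a)) with h' | h' <;>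
        rw [h, h'] at hss ⊢ <;>
        first
        | rfl
        | decide
        | exact absurd rfl hss
    have hd := D1 χ a (ℓ*a) ha0 ha1 hla0 hla1 hala hea'.symm hopp
    rw [show (ℓ*a)/a = ℓ by rw [mul_div_assoc, div_self ha0, mul_one],
      hCl, sm_zero, add_zero] at hd
    exact sub_eq_zero.mp hd

end Main

lemma cl_eq (u : Fˣ) : rpCls F χ u = cls χ (u : F) := by
  rw [cls_def χ u.ne_zero]
  congr 1
  exact Units.ext (by simp)

end Work


/-- Let `F` be a field with at least `4` elements, `χ : F^× → {±1}` with
`χ(−1) = 1`, and `ℓ ∉ {0,1}`.  (a) If `χ(ℓ) = 1` and `χ(1 − ℓ) = −1` then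
`[a] = [ℓ·a]` in `RP₊(F)[1/2]_χ` for all `a ∈ F^×`.  (b) If `χ(ℓ) = −1` and
`χ(1 − ℓ) = −1` then `[a] = [(1 − ℓ⁻¹)·a]` in `RP₊(F)[1/2]_χ` for all `a ∈ F^×`. -/
theorem stmt5 (F : Type) [Field F] (h4 : 4 ≤ Cardinal.mk F)
    (χ : Fˣ →* ℤˣ) (hneg : χ (-1) = 1)
    (ℓ : F) (hℓ0 : ℓ ≠ 0) (hℓ1 : ℓ ≠ 1) :
    ((χ (Units.mk0 ℓ hℓ0) = 1 ∧
        χ (Units.mk0 (1 - ℓ) (sub_ne_zero.mpr (Ne.symm hℓ1))) = -1) →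
      ∀ a : Fˣ, rpCls F χ a = rpCls F χ (Units.mk0 ℓ hℓ0 * a)) ∧
    ((χ (Units.mk0 ℓ hℓ0) = -1 ∧
        χ (Units.mk0 (1 - ℓ) (sub_ne_zero.mpr (Ne.symm hℓ1))) = -1) →
      ∀ a : Fˣ, rpCls F χ a =
        rpCls F χ (Units.mk0 (1 - ℓ⁻¹)
          (sub_ne_zero.mpr (fun h => hℓ1 (inv_eq_one.mp h.symm))) * a)) := by
  have h1l : (1:F) - ℓ ≠ 0 := sub_ne_zero.mpr (Ne.symm hℓ1)
  constructor
  · rintro ⟨hχ1, hχ2⟩ a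
    have he1 : sgn χ ℓ = 1 := by rw [sgn_def χ hℓ0]; exact hχ1
    have he2 : sgn χ (1-ℓ) = -1 := by rw [sgn_def χ h1l]; exact hχ2
    rw [cl_eq χ a, cl_eq χ (Units.mk0 ℓ hℓ0 * a),
      show ((Units.mk0 ℓ hℓ0 * a : Fˣ) : F) = ℓ * (a : F) by simp]
    exact key χ hneg ℓ hℓ0 hℓ1 he1 he2 (a : F) a.ne_zero
  · rintro ⟨hχ1, hχ2⟩ a
    have hi0 : (1:F) - ℓ⁻¹ ≠ 0 := sub_ne_zero.mpr (fun h => hℓ1 (inv_eq_one.mp h.symm))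
    have hi1 : (1:F) - ℓ⁻¹ ≠ 1 := by
      intro h
      exact inv_ne_zero hℓ0 (by linear_combination -h)
    have hel : sgn χ ℓ = -1 := by rw [sgn_def χ hℓ0]; exact hχ1
    have hes : sgn χ (1-ℓ) = -1 := by rw [sgn_def χ h1l]; exact hχ2
    have he1 : sgn χ (1-ℓ⁻¹) = 1 := by
      rw [show (1:F) - ℓ⁻¹ = -(1-ℓ) * ℓ⁻¹ by field_simp; ring,
        sgn_mul χ (neg_ne_zero.mpr h1l) (inv_ne_zero hℓ0),
        sgn_neg χ hneg h1l, sgn_inv χ hℓ0, hes, hel]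
      decide
    have he2 : sgn χ (1-(1-ℓ⁻¹)) = -1 := by
      rw [show (1:F) - (1-ℓ⁻¹) = ℓ⁻¹ by ring, sgn_inv χ hℓ0, hel]
    rw [cl_eq χ a, cl_eq χ _,
      show ((Units.mk0 (1 - ℓ⁻¹)
          (sub_ne_zero.mpr (fun h => hℓ1 (inv_eq_one.mp h.symm))) * a : Fˣ) : F)
        = (1-ℓ⁻¹) * (a : F) by simp]
    exact key χ hneg (1-ℓ⁻¹) hi0 hi1 he1 he2 (a : F) a.ne_zero
end

section
/- Let m ∉ {0, 1} be a squarefree integer, let ω = ω_m and let 𝓞 = ℤ[ω] ⊂ ℂ be the ring of integers of the quadratic field ℚ(√m). Let α and β be non-associated prime elements of 𝓞, and let x ∈ {α, α⁻¹}, y ∈ {ωα, (ωα)⁻¹}, z ∈ {β, β⁻¹}, w ∈ {ωβ, (ωβ)⁻¹} (inverses taken in the field ℚ(√m)). Then 𝓞 ⊆ xℤ[x] + yℤ[y] + zℤ[z] + wℤ[w] as subsets of ℚ(√m). -/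
noncomputable section

/-- The complex square root of an integer `d` (equal to `i·√(−d)` when `d < 0`). -/
def sqrtC (d : ℤ) : ℂ :=
  if 0 ≤ d then ((Real.sqrt (d : ℝ) : ℝ) : ℂ) else Complex.I * ((Real.sqrt ((-d : ℤ) : ℝ) : ℝ) : ℂ)

/-- `ω_d ∈ ℂ`: the standard generator of the ring of integers of `ℚ(√d)` for a
squarefree integer `d`, namely `(1 + √d)/2` if `d ≡ 1 (mod 4)` and `√d` otherwise. -/
def omegaQ (d : ℤ) : ℂ :=
  if d % 4 = 1 then (1 + sqrtC d) / 2 else sqrtC d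

/-- The ring `ℤ[ω_d] = ℤ + ℤω_d`, as a subring of `ℂ`. -/
def quadRing (d : ℤ) : Subring ℂ := Subring.closure {omegaQ d}

end

/-- For a nonzero `e` in a field, `eℤ[e] := {e·p(e) : p ∈ ℤ[X]}`. -/
def zMulSet (e : ℂ) : Set ℂ := {t : ℂ | ∃ p : Polynomial ℤ, t = e * Polynomial.aeval e p}



lemma sqrtC_sq (m : ℤ) : (sqrtC m)^2 = (m : ℂ) := by
  unfold sqrtC
  split_ifs with h
  · rw [← Complex.ofReal_pow, Real.sq_sqrt (by exact_mod_cast h : (0:ℝ) ≤ (m:ℝ))]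
    push_cast; ring
  · have h2 : (0:ℝ) ≤ ((-m : ℤ):ℝ) := by push_cast; simp; omega
    rw [mul_pow, Complex.I_sq, ← Complex.ofReal_pow, Real.sq_sqrt h2]
    push_cast; ring

lemma sqrtC_not_rat (m : ℤ) (hm1 : m ≠ 1) (hsq : Squarefree m) :
    ∀ r : ℚ, sqrtC m ≠ (r : ℂ) := by
  intro r h
  have h2 : ((r:ℂ))^2 = (m:ℂ) := by rw [← h]; exact sqrtC_sq m
  have h3 : (r:ℚ)^2 = (m:ℚ) := by exact_mod_cast h2
  -- r.den = 1
  have hnum : (r.num:ℚ)^2 = (m:ℚ) * (r.den:ℚ)^2 := by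
    have hr : (r.num : ℚ) = r * r.den := by
      rw [mul_comm]; exact_mod_cast (Rat.den_mul_eq_num r).symm
    rw [hr]; rw [← h3]; ring
  have hZ : r.num^2 = m * (r.den:ℤ)^2 := by exact_mod_cast hnum
  have hcop : IsCoprime (r.num) (r.den : ℤ) := by
    rw [Int.isCoprime_iff_gcd_eq_one]; exact r.reduced
  have hdvd : ((r.den:ℤ))^2 ∣ r.num^2 := ⟨m, by linarith [hZ]⟩
  have hunit : IsUnit (((r.den:ℤ))^2) :=
    (hcop.pow (n := 2) (m := 2)).isUnit_of_dvd' hdvd dvd_rfl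
  have hden : (r.den : ℤ) = 1 := by
    rcases Int.isUnit_iff.mp hunit with h1 | h1 <;> nlinarith [r.pos, sq_nonneg ((r.den:ℤ))]
  have hm : r.num ^ 2 = m := by rw [hZ, hden]; ring
  have : IsUnit r.num := hsq r.num ⟨1, by rw [← hm]; ring⟩
  rcases Int.isUnit_iff.mp this with h1 | h1 <;> rw [h1] at hm <;> simp at hm <;> omega

lemma omega_not_rat (m : ℤ) (hm1 : m ≠ 1) (hsq : Squarefree m) :
    ∀ r : ℚ, omegaQ m ≠ (r : ℂ) := by
  intro r h
  unfold omegaQ at h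
  split_ifs at h with h4
  · have : sqrtC m = ((2*r - 1 : ℚ) : ℂ) := by push_cast; linear_combination 2*h
    exact sqrtC_not_rat m hm1 hsq _ this
  · exact sqrtC_not_rat m hm1 hsq r h

lemma omega_ne_zero (m : ℤ) (hm1 : m ≠ 1) (hsq : Squarefree m) : omegaQ m ≠ 0 := by
  have := omega_not_rat m hm1 hsq 0
  simpa using this

lemma exists_omega_sq (m : ℤ) : ∃ d₀ d₁ : ℤ, omegaQ m ^ 2 = (d₀ : ℂ) + (d₁ : ℂ) * omegaQ m := by
  unfold omegaQ
  split_ifs with h4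
  · obtain ⟨k, hk⟩ : (4:ℤ) ∣ m - 1 := by omega
    refine ⟨k, 1, ?_⟩
    have hs := sqrtC_sq m
    have hkC : (m:ℂ) - 1 = 4 * (k:ℂ) := by exact_mod_cast congrArg (Int.cast : ℤ → ℂ) hk
    field_simp
    linear_combination hs + hkC
  · exact ⟨m, 0, by simpa using sqrtC_sq m⟩

lemma quadRing_struct (m : ℤ) (g : quadRing m) :
    ∃ a b : ℤ, (g : ℂ) = (a : ℂ) + (b : ℂ) * omegaQ m := by
  obtain ⟨d₀, d₁, hω⟩ := exists_omega_sq m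
  suffices h : ∀ x, x ∈ Subring.closure {omegaQ m} → ∃ a b : ℤ, x = (a : ℂ) + (b : ℂ) * omegaQ m by
    exact h g g.2
  intro x hx
  induction hx using Subring.closure_induction with
  | mem x hx => exact ⟨0, 1, by simp [Set.mem_singleton_iff.mp hx]⟩
  | zero => exact ⟨0, 0, by simp⟩
  | one => exact ⟨1, 0, by simp⟩
  | add x y hx hy ihx ihy =>
      obtain ⟨a, b, hab⟩ := ihx; obtain ⟨c, d, hcd⟩ := ihy
      exact ⟨a + c, b + d, by rw [hab, hcd]; push_cast; ring⟩
  | neg x hx ihx =>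
      obtain ⟨a, b, hab⟩ := ihx
      exact ⟨-a, -b, by rw [hab]; push_cast; ring⟩
  | mul x y hx hy ihx ihy =>
      obtain ⟨a, b, hab⟩ := ihx; obtain ⟨c, d, hcd⟩ := ihy
      refine ⟨a*c + b*d*d₀, a*d + b*c + b*d*d₁, ?_⟩
      rw [hab, hcd]; push_cast
      linear_combination ((b:ℂ) * (d:ℂ)) * hω

lemma quad_rel (m : ℤ) (hm1 : m ≠ 1) (hsq : Squarefree m) (g : quadRing m) :
    ∃ t n : ℤ, (g:ℂ)^2 = (t:ℂ)*(g:ℂ) - (n:ℂ) ∧ ((g:ℂ) ≠ 0 → n ≠ 0) := by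
  obtain ⟨d₀, d₁, hω⟩ := exists_omega_sq m
  obtain ⟨a, b, hg⟩ := quadRing_struct m g
  refine ⟨2*a + b*d₁, a^2 + a*b*d₁ - b^2*d₀, ?_, ?_⟩
  · rw [hg]; push_cast; linear_combination ((b:ℂ)^2) * hω
  · intro hg0 hn0
    have hfact : (g:ℂ) * (((a:ℂ) + (b:ℂ)*(d₁:ℂ)) - (b:ℂ) * omegaQ m) =
        ((a^2 + a*b*d₁ - b^2*d₀ : ℤ) : ℂ) := by
      rw [hg]; push_cast; linear_combination (-(b:ℂ)^2) * hω
    rw [hn0] at hfact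
    push_cast at hfact
    have h2 : ((a:ℂ) + (b:ℂ)*(d₁:ℂ)) - (b:ℂ) * omegaQ m = 0 := by
      rcases mul_eq_zero.mp hfact with h | h
      · exact absurd h hg0
      · exact h
    by_cases hb : b = 0
    · have ha : (a:ℂ) = 0 := by rw [hb] at h2; push_cast at h2; simpa using h2
      exact hg0 (by rw [hg, hb, ha]; push_cast; ring)
    · have hbC : (b:ℂ) ≠ 0 := Int.cast_ne_zero.mpr hb
      have : omegaQ m = (((a + b*d₁ : ℤ) : ℚ) / ((b:ℤ) : ℚ) : ℚ) := by
        push_cast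
        field_simp
        linear_combination -h2
      exact omega_not_rat m hm1 hsq _ this

open Polynomial in
lemma kmul_mem (e xx : ℂ) (he : e ≠ 0) (t n : ℤ) (hrel : e^2 = (t:ℂ)*e - (n:ℂ))
    (hxx : xx = e ∨ xx = e⁻¹) (k : ℤ) : (k:ℂ) * e ∈ zMulSet xx := by
  rcases hxx with rfl | rfl
  · exact ⟨C k, by simp [mul_comm]⟩
  · refine ⟨C (k*(t^2 - n)) - C (k*t*n) * X, ?_⟩
    simp only [map_sub, map_mul, aeval_C, aeval_X, algebraMap_int_eq, eq_intCast]
    have h3 : e^3 = ((t:ℂ)^2 - (n:ℂ))*e - (t:ℂ)*(n:ℂ) := by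
      linear_combination (e + (t:ℂ)) * hrel
    simp only [map_pow, map_intCast]
    field_simp
    push_cast
    linear_combination (k:ℂ) * h3

lemma comax (m : ℤ) (hm1 : m ≠ 1) (hsq : Squarefree m)
    (α β : quadRing m) (hα : Prime α) (hβ : Prime β) (hab : ¬ Associated α β) :
    ∃ u v : quadRing m, u * α + v * β = 1 := by
  classical
  obtain ⟨t, n, hrel, hn0⟩ := quad_rel m hm1 hsq α
  have hα0 : (α : ℂ) ≠ 0 := by
    simpa using fun h => hα.ne_zero (Subtype.coe_injective (by simpa using h))
  have hn : n ≠ 0 := hn0 hα0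
  have hrelR : α^2 = (t : quadRing m)*α - (n : quadRing m) := by
    apply Subtype.coe_injective
    push_cast
    exact hrel
  set I : Ideal (quadRing m) := Ideal.span {α} with hI
  have hαI : α ∈ I := Ideal.subset_span rfl
  have hnI : (n : quadRing m) ∈ I := by
    have h1 : α * ((t : quadRing m) - α) = (n : quadRing m) := by linear_combination -hrelR
    exact h1 ▸ Ideal.mul_mem_right _ _ hαI
  -- the quotient is finite
  set N := n.natAbs with hN
  haveI : NeZero N := ⟨Int.natAbs_ne_zero.mpr hn⟩
  have hNI : ((N:ℤ) : quadRing m) ∈ I := by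
    rcases Int.natAbs_eq n with h | h
    · rw [← h]; exact hnI
    · have : ((N:ℤ) : quadRing m) = -(n : quadRing m) := by
        rw [show ((N:ℤ):quadRing m) = -((- (N:ℤ) : ℤ) : quadRing m) by push_cast; ring, ← h]
      rw [this]; exact I.neg_mem hnI
  set Ω : quadRing m := ⟨omegaQ m, Subring.subset_closure rfl⟩ with hΩ
  have hstructR : ∀ g : quadRing m, ∃ a b : ℤ, g = (a : quadRing m) + (b : quadRing m) * Ω := by
    intro g
    obtain ⟨a, b, hg⟩ := quadRing_struct m g
    exact ⟨a, b, Subtype.coe_injective (by push_cast; exact hg)⟩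
  have hsurj : Function.Surjective
      (fun p : ZMod N × ZMod N =>
        Ideal.Quotient.mk I (((p.1.val : ℤ) : quadRing m) + ((p.2.val : ℤ) : quadRing m) * Ω)) := by
    intro q
    obtain ⟨g, rfl⟩ := Ideal.Quotient.mk_surjective q
    obtain ⟨a, b, hg⟩ := hstructR g
    refine ⟨((a : ZMod N), (b : ZMod N)), ?_⟩
    rw [Ideal.Quotient.mk_eq_mk_iff_sub_mem]
    obtain ⟨k₁, hk₁⟩ : (N:ℤ) ∣ (((a : ZMod N).val : ℤ) - a) := by
      rw [← ZMod.intCast_zmod_eq_zero_iff_dvd]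
      push_cast
      simp [ZMod.natCast_rightInverse (a : ZMod N)]
    obtain ⟨k₂, hk₂⟩ : (N:ℤ) ∣ (((b : ZMod N).val : ℤ) - b) := by
      rw [← ZMod.intCast_zmod_eq_zero_iff_dvd]
      push_cast
      simp [ZMod.natCast_rightInverse (b : ZMod N)]
    have hdiff : (((a : ZMod N).val : ℤ) : quadRing m) + (((b : ZMod N).val : ℤ) : quadRing m) * Ω - g
        = ((N:ℤ) : quadRing m) * ((k₁ : quadRing m) + (k₂ : quadRing m) * Ω) := by
      rw [hg]
      have e₁ : (((a : ZMod N).val : ℤ) : quadRing m) = ((a + N * k₁ : ℤ) : quadRing m) := by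
        congr 1; omega
      have e₂ : (((b : ZMod N).val : ℤ) : quadRing m) = ((b + N * k₂ : ℤ) : quadRing m) := by
        congr 1; omega
      rw [e₁, e₂]; push_cast; ring
    rw [hdiff]
    exact Ideal.mul_mem_right _ _ hNI
  haveI : Finite (quadRing m ⧸ I) := Finite.of_surjective _ hsurj
  haveI hprime : I.IsPrime := (Ideal.span_singleton_prime hα.ne_zero).mpr hα
  have hfield : IsField (quadRing m ⧸ I) := Finite.isField_of_domain _
  have hmax : I.IsMaximal := Ideal.Quotient.maximal_of_isField I hfield
  have hβI : β ∉ I := by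
    rw [hI, Ideal.mem_span_singleton]
    intro hdvd
    exact hab (hα.associated_of_dvd hβ hdvd)
  obtain ⟨v, i, hiI, hvi⟩ := hmax.exists_inv hβI
  obtain ⟨u, hu⟩ := Ideal.mem_span_singleton'.mp (hI ▸ hiI)
  exact ⟨u, v, by rw [← hvi, ← hu]; ring⟩


open Pointwise in
/-- Let `m ∉ {0,1}` be squarefree, `ω = ω_m`, `𝓞 = ℤ[ω]` the ring of
integers of `ℚ(√m)`.  If `α, β` are non-associated prime elements of `𝓞` and
`x ∈ {α, α⁻¹}`, `y ∈ {ωα, (ωα)⁻¹}`, `z ∈ {β, β⁻¹}`, `w ∈ {ωβ, (ωβ)⁻¹}`, then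
`𝓞 ⊆ xℤ[x] + yℤ[y] + zℤ[z] + wℤ[w]`. -/
theorem stmt10 (m : ℤ) (hm0 : m ≠ 0) (hm1 : m ≠ 1) (hsq : Squarefree m)
    (α β : quadRing m) (hα : Prime α) (hβ : Prime β) (hab : ¬ Associated α β)
    (x y z w : ℂ)
    (hx : x = (α : ℂ) ∨ x = ((α : ℂ))⁻¹)
    (hy : y = omegaQ m * (α : ℂ) ∨ y = (omegaQ m * (α : ℂ))⁻¹)
    (hz : z = (β : ℂ) ∨ z = ((β : ℂ))⁻¹)
    (hw : w = omegaQ m * (β : ℂ) ∨ w = (omegaQ m * (β : ℂ))⁻¹) :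
    ∀ c : quadRing m, (c : ℂ) ∈ zMulSet x + zMulSet y + zMulSet z + zMulSet w := by
  
  intro c
  set Ω : quadRing m := ⟨omegaQ m, Subring.subset_closure rfl⟩ with hΩ
  have hα0 : (α : ℂ) ≠ 0 := by
    simpa using fun h => hα.ne_zero (Subtype.coe_injective (by simpa using h))
  have hβ0 : (β : ℂ) ≠ 0 := by
    simpa using fun h => hβ.ne_zero (Subtype.coe_injective (by simpa using h))
  have hω0 : omegaQ m ≠ 0 := omega_ne_zero m hm1 hsq
  obtain ⟨u, v, huv⟩ := comax m hm1 hsq α β hα hβ hab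
  have hc : c = (c*u)*α + (c*v)*β := by linear_combination c * huv.symm
  obtain ⟨p, q, hpq⟩ := quadRing_struct m (c*u)
  obtain ⟨p', q', hpq'⟩ := quadRing_struct m (c*v)
  have hcC : (c:ℂ) = (((p:ℂ)*(α:ℂ) + (q:ℂ)*(omegaQ m * (α:ℂ))) + (p':ℂ)*(β:ℂ))
      + (q':ℂ)*(omegaQ m * (β:ℂ)) := by
    have hC := congrArg (fun g : quadRing m => (g:ℂ)) hc
    push_cast at hC hpq hpq'
    linear_combination hC + (α:ℂ) * hpq + (β:ℂ) * hpq'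
  obtain ⟨t₁, n₁, hrel₁, _⟩ := quad_rel m hm1 hsq α
  obtain ⟨t₂, n₂, hrel₂, _⟩ := quad_rel m hm1 hsq (Ω * α)
  obtain ⟨t₃, n₃, hrel₃, _⟩ := quad_rel m hm1 hsq β
  obtain ⟨t₄, n₄, hrel₄, _⟩ := quad_rel m hm1 hsq (Ω * β)
  have hΩα : ((Ω * α : quadRing m) : ℂ) = omegaQ m * (α:ℂ) := by push_cast; rfl
  have hΩβ : ((Ω * β : quadRing m) : ℂ) = omegaQ m * (β:ℂ) := by push_cast; rfl
  rw [hΩα] at hrel₂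
  rw [hΩβ] at hrel₄
  have h1 := kmul_mem (α:ℂ) x hα0 t₁ n₁ hrel₁ hx p
  have h2 := kmul_mem (omegaQ m * (α:ℂ)) y (mul_ne_zero hω0 hα0) t₂ n₂ hrel₂ hy q
  have h3 := kmul_mem (β:ℂ) z hβ0 t₃ n₃ hrel₃ hz p'
  have h4 := kmul_mem (omegaQ m * (β:ℂ)) w (mul_ne_zero hω0 hβ0) t₄ n₄ hrel₄ hw q'
  rw [hcC]
  exact Set.add_mem_add (Set.add_mem_add (Set.add_mem_add h1 h2) h3) h4
end

section
/- Let m > 0 be a squarefree integer, let ω = ω_{−m} and let 𝓞 = ℤ[ω] ⊂ ℂ be the ring of integers of the imaginary quadratic field ℚ(√(−m)). Let α and β be non-associated prime elements of 𝓞, and let x ∈ {α, α⁻¹}, y ∈ {β, β⁻¹}, z ∈ {ω, ω⁻¹} (inverses taken in the field ℚ(√(−m))). Then 𝓞 ⊆ xℤ[x] + yℤ[y] + zℤ[z] as subsets of ℚ(√(−m)). -/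
open Polynomial Complex

section sets

lemma zset_zero (e : ℂ) : (0:ℂ) ∈ zMulSet e := ⟨0, by simp [zMulSet]⟩

lemma zset_add {e s r : ℂ} (hs : s ∈ zMulSet e) (hr : r ∈ zMulSet e) : s + r ∈ zMulSet e := by
  obtain ⟨p, rfl⟩ := hs; obtain ⟨q, rfl⟩ := hr
  exact ⟨p + q, by simp [mul_add]⟩

lemma zset_base (e : ℂ) : e ∈ zMulSet e := ⟨1, by simp⟩

lemma zset_int (e : ℂ) (k : ℤ) : e * k ∈ zMulSet e := ⟨C k, by simp⟩

lemma zset_zsmul {e s : ℂ} (k : ℤ) (hs : s ∈ zMulSet e) : (k:ℂ) * s ∈ zMulSet e := by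
  obtain ⟨p, rfl⟩ := hs
  exact ⟨C k * p, by simp; ring⟩

lemma zset_one_inv {e : ℂ} (he : e ≠ 0) {τ ν : ℤ} (h : e^2 = τ*e - ν) :
    (1:ℂ) ∈ zMulSet e⁻¹ := by
  refine ⟨C τ - C ν * X, ?_⟩
  simp only [map_sub, map_mul, aeval_C, aeval_X, algebraMap_int_eq, eq_intCast, map_intCast]
  field_simp
  linear_combination h

lemma zset_norm_mem {e : ℂ} {τ ν : ℤ} (h : e^2 = τ*e - ν) : ((ν:ℤ):ℂ) ∈ zMulSet e := by
  refine ⟨C τ - X, ?_⟩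
  simp only [map_sub, map_mul, aeval_C, aeval_X, algebraMap_int_eq, eq_intCast, map_intCast]
  linear_combination h

end sets

section ring

variable {ω : ℂ} {t n : ℤ}

lemma mem_closure_iff' (hω : ω^2 = t*ω - n) {c : ℂ} :
    c ∈ Subring.closure {ω} ↔ ∃ u v : ℤ, c = u + v*ω := by
  constructor
  · intro hc
    induction hc using Subring.closure_induction with
    | mem x hx => exact ⟨0, 1, by simp [Set.mem_singleton_iff.mp hx]⟩
    | zero => exact ⟨0, 0, by simp⟩
    | one => exact ⟨1, 0, by simp⟩
    | add a b _ _ ha hb =>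
      obtain ⟨u, v, rfl⟩ := ha; obtain ⟨u', v', rfl⟩ := hb
      exact ⟨u + u', v + v', by push_cast; ring⟩
    | neg a _ ha =>
      obtain ⟨u, v, rfl⟩ := ha
      exact ⟨-u, -v, by push_cast; ring⟩
    | mul a b _ _ ha hb =>
      obtain ⟨u, v, rfl⟩ := ha; obtain ⟨u', v', rfl⟩ := hb
      refine ⟨u*u' - n*v*v', u*v' + u'*v + t*v*v', ?_⟩
      push_cast
      linear_combination (v:ℂ)*(v':ℂ)*hω
  · rintro ⟨u, v, rfl⟩
    have h1 : ω ∈ Subring.closure {ω} := Subring.subset_closure rfl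
    exact add_mem (intCast_mem _ u) (mul_mem (intCast_mem _ v) h1)

lemma coords (hω : ω^2 = t*ω - n) (γ : Subring.closure {ω}) :
    ∃ u v : ℤ, (γ:ℂ) = u + v*ω := (mem_closure_iff' hω).mp γ.2

/-- build an element of the ring from coordinates -/
def elem (hω : ω^2 = t*ω - n) (u v : ℤ) : Subring.closure {ω} :=
  ⟨(u:ℂ) + v*ω, (mem_closure_iff' hω).mpr ⟨u, v, rfl⟩⟩

lemma two_re_omega (hω : ω^2 = t*ω - n) (him : ω.im ≠ 0) : 2 * ω.re = t := by
  have h := congrArg Complex.im hω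
  simp [Complex.sub_im, Complex.mul_im, pow_two] at h
  have h2 : (2 * ω.re - t) * ω.im = 0 := by nlinarith [h]
  rcases mul_eq_zero.mp h2 with h1 | h1
  · linarith
  · exact absurd h1 him

lemma norm_identity (hω : ω^2 = t*ω - n) (u v : ℤ) :
    ((u:ℂ) + v*ω) * (((u + t*v : ℤ):ℂ) - v*ω) = ((u^2 + t*u*v + n*v^2 : ℤ) : ℂ) := by
  push_cast
  linear_combination (-(v:ℂ)^2) * hω

lemma conj_coords (hω : ω^2 = t*ω - n) (him : ω.im ≠ 0) (u v : ℤ) :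
    (starRingEnd ℂ) ((u:ℂ) + v*ω) = ((u + t*v : ℤ):ℂ) - v*ω := by
  have h2 := two_re_omega hω him
  have hco : (starRingEnd ℂ) ω = (t:ℂ) - ω := by
    apply Complex.ext <;> simp [Complex.sub_re, Complex.sub_im]
    · linarith
  rw [map_add, map_mul]
  simp only [hco, map_intCast]
  push_cast
  ring

lemma normSq_coords (hω : ω^2 = t*ω - n) (him : ω.im ≠ 0) (u v : ℤ) :
    ((u^2 + t*u*v + n*v^2 : ℤ) : ℝ) = Complex.normSq ((u:ℂ) + v*ω) := by
  have h1 := norm_identity hω u v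
  rw [← conj_coords hω him u v] at h1
  rw [Complex.mul_conj] at h1
  exact_mod_cast h1.symm

lemma normval (hω : ω^2 = t*ω - n) (him : ω.im ≠ 0) {γ : Subring.closure {ω}} {u v : ℤ}
    (h : (γ:ℂ) = u + v*ω) :
    ((u^2 + t*u*v + n*v^2 : ℤ) : ℝ) = Complex.normSq (γ:ℂ) := by
  rw [h]; exact normSq_coords hω him u v

lemma mul_conj (hω : ω^2 = t*ω - n) {γ : Subring.closure {ω}} {u v : ℤ}
    (h : (γ:ℂ) = u + v*ω) :
    γ * elem hω (u + t*v) (-v) = ((u^2 + t*u*v + n*v^2 : ℤ) : Subring.closure {ω}) := by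
  apply Subtype.ext
  have hmul : ((γ * elem hω (u + t*v) (-v) : Subring.closure {ω}) : ℂ)
      = (γ:ℂ) * ((((u + t*v : ℤ)):ℂ) + ((-v : ℤ):ℂ)*ω) := by
    push_cast [elem]; ring
  rw [hmul, h]
  push_cast
  linear_combination (-(v:ℂ)^2) * hω

lemma norm_dvd (hω : ω^2 = t*ω - n) (him : ω.im ≠ 0) {γ δ : Subring.closure {ω}}
    (hdvd : γ ∣ δ) {k l : ℤ}
    (hk : (k:ℝ) = Complex.normSq (γ:ℂ)) (hl : (l:ℝ) = Complex.normSq (δ:ℂ)) : k ∣ l := by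
  obtain ⟨ε, rfl⟩ := hdvd
  obtain ⟨w1, w2, hw⟩ := coords hω ε
  have he : ((w1^2 + t*w1*w2 + n*w2^2 : ℤ):ℝ) = Complex.normSq (ε:ℂ) := normval hω him hw
  refine ⟨w1^2 + t*w1*w2 + n*w2^2, ?_⟩
  have hc : ((γ*ε : Subring.closure {ω}):ℂ) = (γ:ℂ)*(ε:ℂ) := by push_cast; ring
  rw [hc, Complex.normSq_mul, ← hk, ← he] at hl
  exact_mod_cast hl

lemma norm_nonneg_int (hω : ω^2 = t*ω - n) (him : ω.im ≠ 0) (u v : ℤ) :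
    0 ≤ u^2 + t*u*v + n*v^2 := by
  have := normSq_coords hω him u v
  have h2 := Complex.normSq_nonneg ((u:ℂ) + v*ω)
  rw [← this] at h2
  exact_mod_cast h2

lemma norm_unit (hω : ω^2 = t*ω - n) (him : ω.im ≠ 0) {γ : Subring.closure {ω}}
    (hu : IsUnit γ) {k : ℤ} (hk : (k:ℝ) = Complex.normSq (γ:ℂ)) : k = 1 := by
  have h1 : γ ∣ 1 := hu.dvd
  have hone : ((1:ℤ):ℝ) = Complex.normSq ((1 : Subring.closure {ω}):ℂ) := by
    simp
  have hdvd : k ∣ 1 := norm_dvd hω him h1 hk hone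
  have hk0 : 0 ≤ k := by
    have := Complex.normSq_nonneg (γ:ℂ); rw [← hk] at this; exact_mod_cast this
  rcases Int.isUnit_iff.mp (isUnit_of_dvd_one hdvd) with h | h
  · exact h
  · omega

lemma norm_ge_two (hω : ω^2 = t*ω - n) (him : ω.im ≠ 0) {γ : Subring.closure {ω}}
    (hp : Prime γ) {u v : ℤ} (h : (γ:ℂ) = u + v*ω) :
    2 ≤ u^2 + t*u*v + n*v^2 := by
  have h0 : 0 ≤ u^2 + t*u*v + n*v^2 := norm_nonneg_int hω him u v
  have hne : u^2 + t*u*v + n*v^2 ≠ 0 := by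
    intro h0'
    apply hp.ne_zero
    have := normval hω him h
    rw [h0'] at this
    have h2 : Complex.normSq (γ:ℂ) = 0 := by exact_mod_cast this.symm
    have h3 : (γ:ℂ) = 0 := Complex.normSq_eq_zero.mp h2
    exact Subtype.ext (by simpa using h3)
  have hne1 : u^2 + t*u*v + n*v^2 ≠ 1 := by
    intro h1
    apply hp.not_isUnit
    have hc := mul_conj hω h
    rw [h1] at hc
    exact IsUnit.of_mul_eq_one _ (by rw [hc]; norm_cast)
  omega

lemma prime_dvd_nat {α : Subring.closure {ω}} (hα : Prime α) :
    ∀ N : ℕ, 2 ≤ N → α ∣ (N : Subring.closure {ω}) →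
      ∃ q : ℕ, Nat.Prime q ∧ q ∣ N ∧ α ∣ (q : Subring.closure {ω}) := by
  intro N
  induction N using Nat.strong_induction_on with
  | _ N ih =>
    intro h2 hdvd
    have hq := Nat.minFac_prime (show N ≠ 1 by omega)
    have hNM : N = N.minFac * (N / N.minFac) := (Nat.mul_div_cancel' N.minFac_dvd).symm
    have hcast : (N : Subring.closure {ω})
        = (N.minFac : Subring.closure {ω}) * ((N / N.minFac : ℕ) : Subring.closure {ω}) := by
      conv_lhs => rw [hNM]
      push_cast
      ring
    rcases hα.2.2 _ _ (hcast ▸ hdvd) with h | h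
    · exact ⟨N.minFac, hq, N.minFac_dvd, h⟩
    · have hMlt : N / N.minFac < N := Nat.div_lt_self (by omega) hq.two_le
      have hM2 : 2 ≤ N / N.minFac := by
        rcases Nat.lt_or_ge (N / N.minFac) 2 with h' | h'
        · exfalso
          have hM01 : N / N.minFac = 0 ∨ N / N.minFac = 1 := Nat.le_one_iff_eq_zero_or_eq_one.mp (Nat.lt_succ_iff.mp h')
          rcases hM01 with hM | hM
          · rw [hM] at hNM; simp at hNM; omega
          · rw [hM] at h
            exact hα.not_unit (isUnit_of_dvd_one (by simpa using h))
        · exact h'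
      obtain ⟨q, hq', hdq, hαq⟩ := ih _ hMlt hM2 h
      exact ⟨q, hq', hdq.trans (Nat.div_dvd_of_dvd N.minFac_dvd), hαq⟩

lemma prime_dvd_ratprime (hω : ω^2 = t*ω - n) (him : ω.im ≠ 0) {α : Subring.closure {ω}}
    (hα : Prime α) {u v : ℤ} (h : (α:ℂ) = u + v*ω)
    {p : ℕ} (hp : p.Prime) (hpA : (p:ℤ) ∣ u^2 + t*u*v + n*v^2) :
    α ∣ ((p:ℕ) : Subring.closure {ω}) := by
  have hA2 : 2 ≤ u^2 + t*u*v + n*v^2 := norm_ge_two hω him hα h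
  have hconj := mul_conj hω h
  have hαA : α ∣ (((u^2 + t*u*v + n*v^2 : ℤ)) : Subring.closure {ω}) := ⟨_, hconj.symm⟩
  have hAN : (((u^2 + t*u*v + n*v^2 : ℤ).toNat : ℕ) : Subring.closure {ω})
      = (((u^2 + t*u*v + n*v^2 : ℤ)) : Subring.closure {ω}) := by
    norm_cast
    omega
  obtain ⟨q, hq, hqA, hαq⟩ := prime_dvd_nat hα (u^2 + t*u*v + n*v^2).toNat (by omega)
    (by rw [hAN]; exact hαA)
  have hnormq : (((q:ℤ)^2 : ℤ) : ℝ) = Complex.normSq (((q:ℕ) : Subring.closure {ω}) : ℂ) := by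
    have hc : (((q:ℕ) : Subring.closure {ω}):ℂ) = ((q:ℤ):ℂ) + ((0:ℤ):ℂ)*ω := by push_cast; ring
    rw [hc, ← normSq_coords hω him (q:ℤ) 0]
    push_cast; ring
  have hAq2 : (u^2 + t*u*v + n*v^2) ∣ (q:ℤ)^2 :=
    norm_dvd hω him hαq (normval hω him h) hnormq
  have hpq2 : (p:ℤ) ∣ (q:ℤ)^2 := hpA.trans hAq2
  have hpq : p = q := by
    have h1 : p ∣ q^2 := by exact_mod_cast hpq2
    have h2 : p ∣ q := hp.dvd_of_dvd_pow h1
    exact (Nat.prime_dvd_prime_iff_eq hp hq).mp h2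
  rw [hpq]
  exact hαq

lemma assoc_ratprime (hω : ω^2 = t*ω - n) (him : ω.im ≠ 0) {α : Subring.closure {ω}}
    (hα : Prime α) {u v : ℤ} (h : (α:ℂ) = u + v*ω)
    {p : ℕ} (hp : p.Prime) (h1 : (p:ℤ) ∣ u) (h2 : (p:ℤ) ∣ v) :
    Associated ((p:ℕ) : Subring.closure {ω}) α := by
  obtain ⟨c1, hc1⟩ := h1
  obtain ⟨c2, hc2⟩ := h2
  have heq : α = ((p:ℕ) : Subring.closure {ω}) * elem hω c1 c2 := by
    apply Subtype.ext
    push_cast [elem]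
    rw [h, hc1, hc2]
    push_cast
    ring
  rcases hα.irreducible.isUnit_or_isUnit heq with hu | hu
  · exfalso
    have hnp : (((p:ℤ)^2 : ℤ) : ℝ) = Complex.normSq (((p:ℕ) : Subring.closure {ω}) : ℂ) := by
      have hc : (((p:ℕ) : Subring.closure {ω}):ℂ) = ((p:ℤ):ℂ) + ((0:ℤ):ℂ)*ω := by
        push_cast; ring
      rw [hc, ← normSq_coords hω him (p:ℤ) 0]
      push_cast; ring
    have := norm_unit hω him hu hnp
    have hp2 := hp.two_le
    nlinarith
  · exact ⟨hu.unit, by rw [IsUnit.unit_spec]; exact heq.symm⟩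

lemma norm_int_sq (hω : ω^2 = t*ω - n) (him : ω.im ≠ 0) (k : ℤ) :
    ((k^2 : ℤ) : ℝ) = Complex.normSq (((k : ℤ) : Subring.closure {ω}) : ℂ) := by
  have hc : (((k:ℤ) : Subring.closure {ω}):ℂ) = ((k:ℤ):ℂ) + ((0:ℤ):ℂ)*ω := by
    push_cast; ring
  rw [hc, ← normSq_coords hω him k 0]
  push_cast; ring

lemma assoc_of_divides (hω : ω^2 = t*ω - n) (him : ω.im ≠ 0) {γ δ : Subring.closure {ω}}
    (hγ : Prime γ) (hδ : Prime δ) (hgd : ¬ Associated γ δ)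
    {c1 c2 d1 d2 : ℤ} (hcγ : (γ:ℂ) = c1 + c2*ω) (hcδ : (δ:ℂ) = d1 + d2*ω)
    {p : ℕ} (hp : p.Prime) (hpc1 : (p:ℤ) ∣ c1) (hpd1 : (p:ℤ) ∣ d1)
    (hpN : (p:ℤ) ∣ c1^2 + t*c1*c2 + n*c2^2)
    (hγp : γ ∣ ((p:ℕ) : Subring.closure {ω})) :
    Associated ((p:ℕ) : Subring.closure {ω}) γ := by
  have hpZ : Prime (p:ℤ) := Nat.prime_iff_prime_int.mp hp
  have hid : ((c2 : ℤ) : Subring.closure {ω}) * δ - ((d2 : ℤ) : Subring.closure {ω}) * γ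
      = ((c2*d1 - d2*c1 : ℤ) : Subring.closure {ω}) := by
    apply Subtype.ext
    push_cast
    rw [hcγ, hcδ]
    ring
  have hpdvd : (p:ℤ) ∣ c2*d1 - d2*c1 :=
    dvd_sub (Dvd.dvd.mul_left hpd1 c2) (Dvd.dvd.mul_left hpc1 d2)
  have hcastdvd : ((p:ℕ) : Subring.closure {ω}) ∣ ((c2*d1 - d2*c1 : ℤ) : Subring.closure {ω}) := by
    obtain ⟨c, hc⟩ := hpdvd
    exact ⟨(c : Subring.closure {ω}), by rw [hc]; push_cast; ring⟩
  have hγδ2 : γ ∣ ((c2 : ℤ) : Subring.closure {ω}) * δ := by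
    have hrw : ((c2 : ℤ) : Subring.closure {ω}) * δ
        = ((c2*d1 - d2*c1 : ℤ) : Subring.closure {ω}) + ((d2 : ℤ) : Subring.closure {ω}) * γ := by
      rw [← hid]; ring
    rw [hrw]
    exact dvd_add (hγp.trans hcastdvd) (dvd_mul_left _ _)
  have hγ2 : γ ∣ ((c2 : ℤ) : Subring.closure {ω}) := by
    rcases hγ.2.2 _ _ hγδ2 with h | h
    · exact h
    · exact absurd (hγ.associated_of_dvd hδ h) hgd
  have hNc2 : (c1^2 + t*c1*c2 + n*c2^2) ∣ c2^2 :=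
    norm_dvd hω him hγ2 (normval hω him hcγ) (norm_int_sq hω him c2)
  have hpc2 : (p:ℤ) ∣ c2 := hpZ.dvd_of_dvd_pow (hpN.trans hNc2)
  exact assoc_ratprime hω him hγ hcγ hp hpc1 hpc2

lemma bezout (hω : ω^2 = t*ω - n) (him : ω.im ≠ 0) {α β : Subring.closure {ω}}
    (hα : Prime α) (hβ : Prime β) (hab : ¬ Associated α β)
    {a1 a2 b1 b2 : ℤ} (ha : (α:ℂ) = a1 + a2*ω) (hb : (β:ℂ) = b1 + b2*ω) :
    ∃ k k' l l' : ℤ,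
      k*a1 + k'*b1 + l*(a1^2 + t*a1*a2 + n*a2^2) + l'*(b1^2 + t*b1*b2 + n*b2^2) = 1 := by
  set A := a1^2 + t*a1*a2 + n*a2^2 with hA
  set B := b1^2 + t*b1*b2 + n*b2^2 with hB
  have hA2 : 2 ≤ A := norm_ge_two hω him hα ha
  set g1 : ℤ := (Int.gcd a1 b1 : ℤ) with hg1
  set g2 : ℤ := (Int.gcd A B : ℤ) with hg2
  have hd1 : Int.gcd g1 g2 = 1 := by
    by_contra hne
    have hd0 : Int.gcd g1 g2 ≠ 0 := by
      intro h0
      rw [Int.gcd_eq_zero_iff] at h0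
      have h02 := h0.2
      rw [hg2] at h02
      have h03 : Int.gcd A B = 0 := by exact_mod_cast h02
      rw [Int.gcd_eq_zero_iff] at h03
      omega
    have hp := Nat.minFac_prime hne
    set p := (Int.gcd g1 g2).minFac with hpdef
    have hpd : (p:ℤ) ∣ (Int.gcd g1 g2 : ℤ) := Int.ofNat_dvd.mpr (Nat.minFac_dvd _)
    have hpg1 : (p:ℤ) ∣ g1 := hpd.trans (Int.gcd_dvd_left _ _)
    have hpg2 : (p:ℤ) ∣ g2 := hpd.trans (Int.gcd_dvd_right _ _)
    have hpa1 : (p:ℤ) ∣ a1 := hpg1.trans (Int.gcd_dvd_left _ _)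
    have hpb1 : (p:ℤ) ∣ b1 := hpg1.trans (Int.gcd_dvd_right _ _)
    have hpA : (p:ℤ) ∣ A := hpg2.trans (Int.gcd_dvd_left _ _)
    have hpB : (p:ℤ) ∣ B := hpg2.trans (Int.gcd_dvd_right _ _)
    -- α, β both divide p, and both become associated to p: contradiction
    have hαp : α ∣ ((p:ℕ) : Subring.closure {ω}) := prime_dvd_ratprime hω him hα ha hp hpA
    have hβp : β ∣ ((p:ℕ) : Subring.closure {ω}) := prime_dvd_ratprime hω him hβ hb hp hpB
    have hassα : Associated ((p:ℕ) : Subring.closure {ω}) α :=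
      assoc_of_divides hω him hα hβ hab ha hb hp hpa1 hpb1 hpA hαp
    have hassβ : Associated ((p:ℕ) : Subring.closure {ω}) β :=
      assoc_of_divides hω him hβ hα (fun h => hab h.symm) hb ha hp hpb1 hpa1 hpB hβp
    exact hab (hassα.symm.trans hassβ)
  have e0 : (1:ℤ) = g1 * Int.gcdA g1 g2 + g2 * Int.gcdB g1 g2 := by
    have := Int.gcd_eq_gcd_ab g1 g2
    rw [hd1] at this
    exact_mod_cast this
  have e1 : g1 = a1 * Int.gcdA a1 b1 + b1 * Int.gcdB a1 b1 := Int.gcd_eq_gcd_ab a1 b1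
  have e2 : g2 = A * Int.gcdA A B + B * Int.gcdB A B := Int.gcd_eq_gcd_ab A B
  refine ⟨Int.gcdA a1 b1 * Int.gcdA g1 g2, Int.gcdB a1 b1 * Int.gcdA g1 g2,
    Int.gcdA A B * Int.gcdB g1 g2, Int.gcdB A B * Int.gcdB g1 g2, ?_⟩
  linear_combination -e0 - (Int.gcdA g1 g2) * e1 - (Int.gcdB g1 g2) * e2

end ring

lemma omega_spec (m : ℤ) (hm : 0 < m) :
    ∃ t n : ℤ, (omegaQ (-m))^2 = t*(omegaQ (-m)) - n ∧ (omegaQ (-m)).im ≠ 0 := by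
  have hmr : (0:ℝ) < (m:ℝ) := by exact_mod_cast hm
  set r : ℝ := Real.sqrt (m:ℝ) with hrdef
  have hr : r^2 = (m:ℝ) := Real.sq_sqrt hmr.le
  have hrpos : 0 < r := Real.sqrt_pos.mpr hmr
  have hsq : sqrtC (-m) = Complex.I * (r:ℂ) := by
    rw [sqrtC, if_neg (by omega)]
    norm_num
    exact hrdef.symm
  have hrc : ((r:ℂ))^2 = (m:ℂ) := by
    rw [← Complex.ofReal_pow, hr]
    norm_cast
  by_cases h4 : (-m) % 4 = 1
  · have hdvd : (4:ℤ) ∣ m + 1 := by omega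
    refine ⟨1, (m+1)/4, ?_, ?_⟩
    · rw [omegaQ, if_pos h4, hsq]
      have hn : (((m+1)/4 : ℤ) : ℂ) * 4 = (m:ℂ) + 1 := by
        rw_mod_cast [Int.ediv_mul_cancel hdvd]
      linear_combination ((r:ℂ)^2/4) * Complex.I_sq - hrc/4 + hn/4
    · rw [omegaQ, if_pos h4, hsq]
      simp [Complex.div_im]
      positivity
  · refine ⟨0, m, ?_, ?_⟩
    · rw [omegaQ, if_neg h4, hsq]
      push_cast
      linear_combination (r:ℂ)^2 * Complex.I_sq - hrc
    · rw [omegaQ, if_neg h4, hsq]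
      simp
      positivity

open Pointwise in
/-- Let `m > 0` be squarefree, `ω = ω_{−m}`, `𝓞 = ℤ[ω]` the ring of
integers of `ℚ(√(−m))`.  If `α, β` are non-associated prime elements of `𝓞` and
`x ∈ {α, α⁻¹}`, `y ∈ {β, β⁻¹}`, `z ∈ {ω, ω⁻¹}`, then `𝓞 ⊆ xℤ[x] + yℤ[y] + zℤ[z]`. -/
theorem stmt11 (m : ℤ) (hm : 0 < m) (hsq : Squarefree m)
    (α β : quadRing (-m)) (hα : Prime α) (hβ : Prime β) (hab : ¬ Associated α β)
    (x y z : ℂ)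
    (hx : x = (α : ℂ) ∨ x = ((α : ℂ))⁻¹)
    (hy : y = (β : ℂ) ∨ y = ((β : ℂ))⁻¹)
    (hz : z = omegaQ (-m) ∨ z = (omegaQ (-m))⁻¹) :
    ∀ c : quadRing (-m), (c : ℂ) ∈ zMulSet x + zMulSet y + zMulSet z := by
  obtain ⟨t, n, hω, him⟩ := omega_spec m hm
  intro c
  have hmemtriple : ∀ s1 s2 s3 : ℂ, s1 ∈ zMulSet x → s2 ∈ zMulSet y → s3 ∈ zMulSet z →
      (c:ℂ) = s1 + s2 + s3 → (c:ℂ) ∈ zMulSet x + zMulSet y + zMulSet z := by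
    intro s1 s2 s3 h1 h2 h3 he
    rw [he]
    exact Set.add_mem_add (Set.add_mem_add h1 h2) h3
  have hω0 : omegaQ (-m) ≠ 0 := by
    intro h; rw [h] at him; simp at him
  obtain ⟨u, v, hc⟩ := coords hω c
  obtain ⟨a1, a2, ha⟩ := coords hω α
  obtain ⟨b1, b2, hb⟩ := coords hω β
  have hquadα : ((α:ℂ))^2 = ((2*a1 + t*a2 : ℤ):ℂ)*(α:ℂ) - ((a1^2 + t*a1*a2 + n*a2^2 : ℤ):ℂ) := by
    rw [ha]; push_cast; linear_combination (a2:ℂ)^2*hω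
  have hquadβ : ((β:ℂ))^2 = ((2*b1 + t*b2 : ℤ):ℂ)*(β:ℂ) - ((b1^2 + t*b1*b2 + n*b2^2 : ℤ):ℂ) := by
    rw [hb]; push_cast; linear_combination (b2:ℂ)^2*hω
  have hα0 : (α:ℂ) ≠ 0 := by
    intro h0
    exact hα.ne_zero (Subtype.ext (by simpa using h0))
  have hβ0 : (β:ℂ) ≠ 0 := by
    intro h0
    exact hβ.ne_zero (Subtype.ext (by simpa using h0))
  rcases hz with hz | hz
  · -- z = ω
    rcases hx with hx | hx
    · rcases hy with hy | hy
      · -- hard case : x = α, y = β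
        obtain ⟨k, k', l, l', hbez⟩ := bezout hω him hα hβ hab ha hb
        have hbezC : ((k*a1 + k'*b1 + l*(a1^2 + t*a1*a2 + n*a2^2)
            + l'*(b1^2 + t*b1*b2 + n*b2^2) : ℤ):ℂ) = 1 := by
          rw [hbez]; norm_num
        refine hmemtriple
          (((u*k : ℤ):ℂ) * (α:ℂ) + ((u*l : ℤ):ℂ) * ((a1^2 + t*a1*a2 + n*a2^2 : ℤ):ℂ))
          (((u*k' : ℤ):ℂ) * (β:ℂ) + ((u*l' : ℤ):ℂ) * ((b1^2 + t*b1*b2 + n*b2^2 : ℤ):ℂ))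
          (z * ((v - u*k*a2 - u*k'*b2 : ℤ):ℂ)) ?_ ?_ ?_ ?_
        · rw [hx]
          exact zset_add (zset_zsmul _ (zset_base _)) (zset_zsmul _ (zset_norm_mem hquadα))
        · rw [hy]
          exact zset_add (zset_zsmul _ (zset_base _)) (zset_zsmul _ (zset_norm_mem hquadβ))
        · exact zset_int _ _
        · rw [hc, ha, hb, hz]
          push_cast
          push_cast at hbezC
          linear_combination -(u:ℂ) * hbezC
      · -- y = β⁻¹
        refine hmemtriple 0 ((u:ℤ) * 1) (z * (v:ℤ)) (zset_zero x) ?_ ?_ ?_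
        · rw [hy]
          exact zset_zsmul _ (zset_one_inv hβ0 hquadβ)
        · exact zset_int _ _
        · rw [hc, hz]
          push_cast
          ring
    · -- x = α⁻¹
      refine hmemtriple ((u:ℤ) * 1) 0 (z * (v:ℤ)) ?_ (zset_zero y) ?_ ?_
      · rw [hx]
        exact zset_zsmul _ (zset_one_inv hα0 hquadα)
      · exact zset_int _ _
      · rw [hc, hz]
        push_cast
        ring
  · -- z = ω⁻¹
    refine hmemtriple 0 0 (((u + t*v : ℤ):ℂ) * 1 + z * ((-(n*v) : ℤ):ℂ))
      (zset_zero x) (zset_zero y) ?_ ?_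
    · refine zset_add (zset_zsmul _ ?_) ?_
      · rw [hz]
        exact zset_one_inv hω0 hω
      · rw [hz]
        exact zset_int _ _
    · rw [hc, hz]
      push_cast
      field_simp
      linear_combination (v:ℂ) * hω
end

section
/- Let m > 0 be a squarefree integer and let 𝓞 = ℤ[ω_{−m}] ⊂ ℂ be the ring of integers of the imaginary quadratic field ℚ(√(−m)). Let α, β ∈ 𝓞 be elements such that N(α) and N(β) are distinct rational primes (where N denotes the norm N(γ) = γ·γ̄). Then ℤ ⊆ αℤ[α] + βℤ[β] as subsets of ℚ(√(−m)); in particular 1 ∈ αℤ[α] + βℤ[β]. -/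
lemma omega_key (m : ℤ) (hm : 0 < m) :
    ∃ s T : ℤ, (omegaQ (-m)) ^ 2 = (s : ℂ) + (T : ℂ) * omegaQ (-m) ∧
      (starRingEnd ℂ) (omegaQ (-m)) = (T : ℂ) - omegaQ (-m) := by
  have hneg : ¬ (0 ≤ -m) := by omega
  have hw : sqrtC (-m) = Complex.I * ((Real.sqrt (m : ℝ) : ℝ) : ℂ) := by
    unfold sqrtC
    rw [if_neg hneg]
    norm_num
  have hm0 : (0 : ℝ) ≤ (m : ℝ) := by exact_mod_cast hm.le
  have hw2 : (sqrtC (-m)) ^ 2 = -(m : ℂ) := by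
    rw [hw, mul_pow, Complex.I_sq]
    rw [← Complex.ofReal_pow, Real.sq_sqrt hm0]
    push_cast
    ring
  have hwc : (starRingEnd ℂ) (sqrtC (-m)) = -(sqrtC (-m)) := by
    rw [hw]
    simp [Complex.conj_I]
  unfold omegaQ
  by_cases h4 : (-m) % 4 = 1
  · rw [if_pos h4]
    have hdvd : (4 : ℤ) ∣ m + 1 := by omega
    obtain ⟨k, hk⟩ := hdvd
    refine ⟨-k, 1, ?_, ?_⟩
    · have hkC : (m : ℂ) + 1 = 4 * (k : ℂ) := by exact_mod_cast hk
      push_cast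
      linear_combination (1/4 : ℂ) * hw2 - (1/4 : ℂ) * hkC
    · rw [map_div₀, map_add, hwc, map_one, map_ofNat]
      push_cast
      ring
  · rw [if_neg h4]
    exact ⟨-m, 0, by push_cast; linear_combination hw2, by rw [hwc]; push_cast; ring⟩

lemma rep_lemma (m : ℤ) (hm : 0 < m) (x : ℂ) (hx : x ∈ quadRing (-m)) :
    ∃ a b : ℤ, x = (a : ℂ) + (b : ℂ) * omegaQ (-m) := by
  obtain ⟨s, T, hs, -⟩ := omega_key m hm
  induction hx using Subring.closure_induction with
  | mem y hy =>
    rw [Set.mem_singleton_iff] at hy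
    exact ⟨0, 1, by rw [hy]; push_cast; ring⟩
  | zero => exact ⟨0, 0, by push_cast; ring⟩
  | one => exact ⟨1, 0, by push_cast; ring⟩
  | add x y hx hy ihx ihy =>
    obtain ⟨a, b, rfl⟩ := ihx
    obtain ⟨c, d, rfl⟩ := ihy
    exact ⟨a + c, b + d, by push_cast; ring⟩
  | neg x hx ihx =>
    obtain ⟨a, b, rfl⟩ := ihx
    exact ⟨-a, -b, by push_cast; ring⟩
  | mul x y hx hy ihx ihy =>
    obtain ⟨a, b, rfl⟩ := ihx
    obtain ⟨c, d, rfl⟩ := ihy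
    refine ⟨a * c + b * d * s, a * d + b * c + b * d * T, ?_⟩
    push_cast
    linear_combination ((b : ℂ) * d) * hs

lemma trace_lemma (m : ℤ) (hm : 0 < m) (x : quadRing (-m)) :
    ∃ t : ℤ, (starRingEnd ℂ) (x : ℂ) = (t : ℂ) - (x : ℂ) := by
  obtain ⟨a, b, hab⟩ := rep_lemma m hm (x : ℂ) x.2
  obtain ⟨s, T, -, hc⟩ := omega_key m hm
  refine ⟨2 * a + b * T, ?_⟩
  rw [hab, map_add, map_mul, map_intCast, map_intCast, hc]
  push_cast
  ring

lemma norm_mem (m : ℤ) (hm : 0 < m) (α : quadRing (-m)) (p : ℕ)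
    (hNα : (α : ℂ) * (starRingEnd ℂ) (α : ℂ) = (p : ℂ)) (k : ℤ) :
    ((k : ℂ) * (p : ℂ)) ∈ zMulSet (α : ℂ) := by
  obtain ⟨t, ht⟩ := trace_lemma m hm α
  refine ⟨Polynomial.C k * (Polynomial.C t - Polynomial.X), ?_⟩
  simp only [map_mul, map_sub, Polynomial.aeval_C, Polynomial.aeval_X,
    algebraMap_int_eq, eq_intCast, map_intCast]
  linear_combination -(k : ℂ) * hNα + (k : ℂ) * (α : ℂ) * ht

open Pointwise in
/-- Let `m > 0` be squarefree and `𝓞 = ℤ[ω_{−m}]` the ring of integers of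
the imaginary quadratic field `ℚ(√(−m))`.  If `α, β ∈ 𝓞` have norms `N(α) = α·ᾱ` and
`N(β) = β·β̄` which are distinct rational primes, then `ℤ ⊆ αℤ[α] + βℤ[β]`;
in particular `1 ∈ αℤ[α] + βℤ[β]`. -/
theorem stmt12 (m : ℤ) (hm : 0 < m) (hsq : Squarefree m)
    (α β : quadRing (-m)) (p q : ℕ) (hp : Nat.Prime p) (hq : Nat.Prime q) (hpq : p ≠ q)
    (hNα : (α : ℂ) * (starRingEnd ℂ) (α : ℂ) = (p : ℂ))
    (hNβ : (β : ℂ) * (starRingEnd ℂ) (β : ℂ) = (q : ℂ)) :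
    (∀ n : ℤ, (n : ℂ) ∈ zMulSet (α : ℂ) + zMulSet (β : ℂ)) ∧
      (1 : ℂ) ∈ zMulSet (α : ℂ) + zMulSet (β : ℂ) := by
  have hcop : IsCoprime (p : ℤ) (q : ℤ) := by
    rw [Int.isCoprime_iff_gcd_eq_one]
    simpa [Int.gcd] using (Nat.coprime_primes hp hq).mpr hpq
  obtain ⟨u, v, huv⟩ := hcop
  have huvC : (u : ℂ) * (p : ℂ) + (v : ℂ) * (q : ℂ) = 1 := by exact_mod_cast huv
  have main : ∀ n : ℤ, (n : ℂ) ∈ zMulSet (α : ℂ) + zMulSet (β : ℂ) := by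
    intro n
    have h1 := norm_mem m hm α p hNα (n * u)
    have h2 := norm_mem m hm β q hNβ (n * v)
    have key : (n : ℂ) = ((n * u : ℤ) : ℂ) * (p : ℂ) + ((n * v : ℤ) : ℂ) * (q : ℂ) := by
      push_cast
      linear_combination -(n : ℂ) * huvC
    rw [key]
    exact Set.add_mem_add h1 h2
  exact ⟨main, by simpa using main 1⟩
end

section
/- Let G be a multiplicative abelian group in which g² = 1 for every g ∈ G, and let H ≤ G be a subgroup. Let M and N be ℤ[G]-modules on which multiplication by 2 is bijective, and let f : M → N be a ℤ[G]-module homomorphism. Suppose that for every group homomorphism χ : G → {±1} with χ(h) = 1 for all h ∈ H, the induced map f_χ : M_χ → N_χ is an isomorphism. Then the induced map on H-coinvariants M_H → N_H is an isomorphism, where M_H := M/⟨h·m − m : h ∈ H, m ∈ M⟩ and likewise for N_H. -/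
section

variable (G : Type) [CommGroup G]

/-- `M^χ`: the `ℤ[G]`-submodule of `M` generated by `{g·m − χ(g)·m : g ∈ G, m ∈ M}`. -/
noncomputable def chSub (χ : G →* ℤˣ) (M : Type) [AddCommGroup M] [Module (MonoidAlgebra ℤ G) M] :
    Submodule (MonoidAlgebra ℤ G) M :=
  Submodule.span (MonoidAlgebra ℤ G)
    {x : M | ∃ (g : G) (m : M), x = (MonoidAlgebra.of ℤ G g) • m - ((χ g : ℤ)) • m}

/-- The submodule of `M` generated by `{h·m − m : h ∈ H, m ∈ M}`; the quotient by it
is the module `M_H` of `H`-coinvariants. -/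
noncomputable def coinvSub (H : Subgroup G) (M : Type) [AddCommGroup M] [Module (MonoidAlgebra ℤ G) M] :
    Submodule (MonoidAlgebra ℤ G) M :=
  Submodule.span (MonoidAlgebra ℤ G)
    {x : M | ∃ h ∈ H, ∃ m : M, x = (MonoidAlgebra.of ℤ G h) • m - m}

variable {G}
variable {M N : Type} [AddCommGroup M] [AddCommGroup N]
  [Module (MonoidAlgebra ℤ G) M] [Module (MonoidAlgebra ℤ G) N]

lemma chSub_le (χ : G →* ℤˣ) (f : M →ₗ[MonoidAlgebra ℤ G] N) :
    chSub G χ M ≤ (chSub G χ N).comap f := by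
  rw [chSub, Submodule.span_le]
  rintro x ⟨g, m, rfl⟩
  simp only [SetLike.mem_coe, Submodule.mem_comap, map_sub, map_zsmul, LinearMap.map_smul]
  exact Submodule.subset_span ⟨g, f m, rfl⟩

lemma coinvSub_le (H : Subgroup G) (f : M →ₗ[MonoidAlgebra ℤ G] N) :
    coinvSub G H M ≤ (coinvSub G H N).comap f := by
  rw [coinvSub, Submodule.span_le]
  rintro x ⟨h, hH, m, rfl⟩
  simp only [SetLike.mem_coe, Submodule.mem_comap, map_sub, LinearMap.map_smul]
  exact Submodule.subset_span ⟨h, hH, f m, rfl⟩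

end

section aux

variable {G : Type} [CommGroup G]

/-- The ring hom `ℤ[G] → ℤ` induced by a character. -/
noncomputable def chLift (χ : G →* ℤˣ) : MonoidAlgebra ℤ G →ₐ[ℤ] ℤ :=
  MonoidAlgebra.lift ℤ ℤ G ((Units.coeHom ℤ).comp χ)

lemma chLift_of (χ : G →* ℤˣ) (g : G) :
    chLift χ (MonoidAlgebra.of ℤ G g) = (χ g : ℤ) := by
  simp [chLift, MonoidAlgebra.lift_of]

lemma exists_ann (hG : ∀ g : G, g ^ 2 = 1) (χ : G →* ℤˣ)
    {M : Type} [AddCommGroup M] [Module (MonoidAlgebra ℤ G) M]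
    {x : M} (hx : x ∈ chSub G χ M) :
    ∃ v : MonoidAlgebra ℤ G, v • x = 0 ∧ ∃ n : ℕ, chLift χ v ∣ 2 ^ n := by
  rw [chSub] at hx
  induction hx using Submodule.span_induction with
  | mem x hxs =>
      obtain ⟨g, m, rfl⟩ := hxs
      refine ⟨MonoidAlgebra.of ℤ G g + ((χ g : ℤ) : MonoidAlgebra ℤ G), ?_, 1, ?_⟩
      · have hx' : MonoidAlgebra.of ℤ G g • m - ((χ g : ℤ)) • m
            = (MonoidAlgebra.of ℤ G g - ((χ g : ℤ) : MonoidAlgebra ℤ G)) • m := by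
          rw [sub_smul, Int.cast_smul_eq_zsmul]
        have h1 : MonoidAlgebra.of ℤ G g * MonoidAlgebra.of ℤ G g = 1 := by
          rw [← map_mul, ← pow_two, hG g, map_one]
        have hu : (χ g : ℤ) * (χ g : ℤ) = 1 := by
          rcases Int.units_eq_one_or (χ g) with h | h <;> simp [h]
        have h2 : (((χ g : ℤ) : MonoidAlgebra ℤ G)) * ((χ g : ℤ) : MonoidAlgebra ℤ G) = 1 := by
          rw [← Int.cast_mul, hu, Int.cast_one]
        have hprod : (MonoidAlgebra.of ℤ G g + ((χ g : ℤ) : MonoidAlgebra ℤ G)) *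
            (MonoidAlgebra.of ℤ G g - ((χ g : ℤ) : MonoidAlgebra ℤ G)) = 0 := by
          have expand : ∀ a c : MonoidAlgebra ℤ G, (a + c) * (a - c) = a * a - c * c := by
            intros; ring
          rw [expand, h1, h2, sub_self]
        rw [hx', smul_smul, hprod, zero_smul]
      · have hval : chLift χ (MonoidAlgebra.of ℤ G g + ((χ g : ℤ) : MonoidAlgebra ℤ G))
            = (χ g : ℤ) + (χ g : ℤ) := by
          rw [map_add, chLift_of, map_intCast, Int.cast_id]
        have hu : (χ g : ℤ) * (χ g : ℤ) = 1 := by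
          rcases Int.units_eq_one_or (χ g) with h | h <;> simp [h]
        rw [hval, pow_one]
        refine ⟨(χ g : ℤ), ?_⟩
        rw [add_mul, hu]
        norm_num
  | zero => exact ⟨1, by simp, 0, by simp⟩
  | add x y hx hy ihx ihy =>
      obtain ⟨v, hv0, n, hvd⟩ := ihx
      obtain ⟨w, hw0, m, hwd⟩ := ihy
      refine ⟨v * w, ?_, n + m, ?_⟩
      · have h1 : (v * w) • x = 0 := by rw [mul_comm, mul_smul, hv0, smul_zero]
        have h2 : (v * w) • y = 0 := by rw [mul_smul, hw0, smul_zero]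
        rw [smul_add, h1, h2, add_zero]
      · rw [map_mul, pow_add]; exact mul_dvd_mul hvd hwd
  | smul r x hx ih =>
      obtain ⟨v, hv0, n, hvd⟩ := ih
      exact ⟨v, by rw [smul_smul, mul_comm, ← smul_smul, hv0, smul_zero], n, hvd⟩

set_option maxHeartbeats 1000000 in
lemma keyIdeal (hG : ∀ g : G, g ^ 2 = 1) (H : Subgroup G)
    (A : Ideal (MonoidAlgebra ℤ G))
    (hH : ∀ h ∈ H, MonoidAlgebra.of ℤ G h - 1 ∈ A)
    (hv : ∀ χ : G →* ℤˣ, (∀ h ∈ H, χ h = 1) →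
      ∃ v ∈ A, ∃ n : ℕ, chLift χ v ∣ 2 ^ n) :
    ∃ n : ℕ, (2 : MonoidAlgebra ℤ G) ^ n ∈ A := by
  classical
  by_contra hcon
  push_neg at hcon
  have hdisj : Disjoint (A : Set (MonoidAlgebra ℤ G))
      (Submonoid.powers (2 : MonoidAlgebra ℤ G) : Set (MonoidAlgebra ℤ G)) := by
    rw [Set.disjoint_left]
    rintro a ha ⟨n, rfl⟩
    exact hcon n ha
  obtain ⟨p, hp, hAp, hdp⟩ := Ideal.exists_le_prime_disjoint A _ hdisj
  haveI := hp
  set π := Ideal.Quotient.mk p with hπ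
  have h2 : (2 : MonoidAlgebra ℤ G ⧸ p) ≠ 0 := by
    intro h
    have h2p : (2 : MonoidAlgebra ℤ G) ∈ p := by
      rwa [← map_ofNat π 2, Ideal.Quotient.eq_zero_iff_mem] at h
    exact Set.disjoint_left.mp hdp h2p ⟨1, pow_one 2⟩
  have hne : (1 : MonoidAlgebra ℤ G ⧸ p) ≠ -1 := by
    intro h
    apply h2
    linear_combination h
  have key : ∀ g : G, π (MonoidAlgebra.of ℤ G g) = 1 ∨ π (MonoidAlgebra.of ℤ G g) = -1 := by
    intro g
    have hsq : π (MonoidAlgebra.of ℤ G g) * π (MonoidAlgebra.of ℤ G g) = 1 := by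
      rw [← map_mul, ← map_mul (MonoidAlgebra.of ℤ G), ← pow_two, hG g, map_one, map_one]
    have hz : (π (MonoidAlgebra.of ℤ G g) - 1) * (π (MonoidAlgebra.of ℤ G g) + 1) = 0 := by
      have expand : ∀ a : MonoidAlgebra ℤ G ⧸ p, (a - 1) * (a + 1) = a * a - 1 := by
        intros; ring
      rw [expand, hsq, sub_self]
    rcases mul_eq_zero.mp hz with h | h
    · exact Or.inl (sub_eq_zero.mp h)
    · exact Or.inr (eq_neg_of_add_eq_zero_left h)
  set χf : G → ℤˣ := fun g => if π (MonoidAlgebra.of ℤ G g) = 1 then 1 else -1 with hχf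
  have hχval : ∀ g : G, π (MonoidAlgebra.of ℤ G g) = ((χf g : ℤ) : MonoidAlgebra ℤ G ⧸ p) := by
    intro g
    have hfg : χf g = if π (MonoidAlgebra.of ℤ G g) = 1 then 1 else -1 := rfl
    by_cases h : π (MonoidAlgebra.of ℤ G g) = 1
    · rw [hfg, if_pos h, h]; simp
    · rw [hfg, if_neg h, (key g).resolve_left h]; simp
  have castinj : ∀ u w : ℤˣ,
      ((u : ℤ) : MonoidAlgebra ℤ G ⧸ p) = ((w : ℤ) : MonoidAlgebra ℤ G ⧸ p) → u = w := by
    intro u w h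
    rcases Int.units_eq_one_or u with rfl | rfl <;> rcases Int.units_eq_one_or w with rfl | rfl
    · rfl
    · exact absurd (by simpa using h) hne
    · exact absurd (by simpa using h.symm) hne
    · rfl
  set χ : G →* ℤˣ := MonoidHom.mk' χf (by
    intro a b
    apply castinj
    calc ((χf (a * b) : ℤ) : MonoidAlgebra ℤ G ⧸ p)
        = π (MonoidAlgebra.of ℤ G (a * b)) := (hχval _).symm
      _ = π (MonoidAlgebra.of ℤ G a) * π (MonoidAlgebra.of ℤ G b) := by
          rw [map_mul (MonoidAlgebra.of ℤ G), map_mul]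
      _ = ((χf a : ℤ) : MonoidAlgebra ℤ G ⧸ p) * ((χf b : ℤ) : MonoidAlgebra ℤ G ⧸ p) := by
          rw [hχval, hχval]
      _ = (((χf a * χf b : ℤˣ) : ℤ) : MonoidAlgebra ℤ G ⧸ p) := by push_cast; ring) with hχdef
  have htriv : ∀ h ∈ H, χ h = 1 := by
    intro h hh
    apply castinj
    have hz : π (MonoidAlgebra.of ℤ G h - 1) = 0 :=
      Ideal.Quotient.eq_zero_iff_mem.mpr (hAp (hH h hh))
    rw [map_sub, map_one, sub_eq_zero] at hz
    have : ((χ h : ℤ) : MonoidAlgebra ℤ G ⧸ p) = π (MonoidAlgebra.of ℤ G h) := (hχval h).symm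
    rw [this, hz]
    simp
  have hfact : ∀ r : MonoidAlgebra ℤ G,
      π r = ((chLift χ r : ℤ) : MonoidAlgebra ℤ G ⧸ p) := by
    have heq : (Ideal.Quotient.mkₐ ℤ p)
        = ((Algebra.ofId ℤ (MonoidAlgebra ℤ G ⧸ p)).comp (chLift χ)) := by
      refine MonoidAlgebra.algHom_ext ?_ (Subsingleton.elim _ _)
      intro g
      simp only [← MonoidAlgebra.of_apply (R := ℤ)]
      have h1 : (Ideal.Quotient.mkₐ ℤ p) (MonoidAlgebra.of ℤ G g)
          = π (MonoidAlgebra.of ℤ G g) := rfl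
      rw [h1, hχval]
      rw [AlgHom.comp_apply, chLift_of]
      have h3 : ((Algebra.ofId ℤ (MonoidAlgebra ℤ G ⧸ p))) ((χ g : ℤ))
          = (((χ g : ℤ) : ℤ) : MonoidAlgebra ℤ G ⧸ p) := by
        simp [Algebra.ofId_apply]
      rw [h3]
      rfl
    intro r
    have h4 := DFunLike.congr_fun heq r
    calc π r = (Ideal.Quotient.mkₐ ℤ p) r := rfl
      _ = ((Algebra.ofId ℤ (MonoidAlgebra ℤ G ⧸ p)).comp (chLift χ)) r := h4
      _ = ((chLift χ r : ℤ) : MonoidAlgebra ℤ G ⧸ p) := by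
          rw [AlgHom.comp_apply]
          simp [Algebra.ofId_apply]
  obtain ⟨v, hvA, n, b, hb⟩ := hv χ htriv
  have h0 : ((chLift χ v : ℤ) : MonoidAlgebra ℤ G ⧸ p) = 0 := by
    rw [← hfact]
    exact Ideal.Quotient.eq_zero_iff_mem.mpr (hAp hvA)
  have hzero : (2 : MonoidAlgebra ℤ G ⧸ p) ^ n = 0 := by
    calc (2 : MonoidAlgebra ℤ G ⧸ p) ^ n
        = (((2 : ℤ) ^ n : ℤ) : MonoidAlgebra ℤ G ⧸ p) := by push_cast; ring
      _ = ((chLift χ v * b : ℤ) : MonoidAlgebra ℤ G ⧸ p) := by rw [← hb]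
      _ = ((chLift χ v : ℤ) : MonoidAlgebra ℤ G ⧸ p) * ((b : ℤ) : MonoidAlgebra ℤ G ⧸ p) := by
          push_cast; ring
      _ = 0 := by rw [h0, zero_mul]
  exact pow_ne_zero n h2 hzero

lemma sat_pow {N : Type} [AddCommGroup N] [Module (MonoidAlgebra ℤ G) N]
    (h2N : Function.Bijective (fun n : N => (2 : ℤ) • n))
    (T : Submodule (MonoidAlgebra ℤ G) N)
    (hdiv : ∀ t ∈ T, ∃ t' ∈ T, (2 : ℤ) • t' = t) :
    ∀ (k : ℕ) (y : N), (2 : ℤ) ^ k • y ∈ T → y ∈ T := by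
  have hsat : ∀ y : N, (2 : ℤ) • y ∈ T → y ∈ T := by
    intro y hy
    obtain ⟨t', ht', h⟩ := hdiv _ hy
    have ht : t' = y := h2N.1 h
    rwa [← ht]
  intro k
  induction k with
  | zero => intro y hy; simpa using hy
  | succ k ih =>
      intro y hy
      rw [pow_succ, mul_smul] at hy
      exact hsat y (ih _ hy)

lemma smul_two_comm {N : Type} [AddCommGroup N] [Module (MonoidAlgebra ℤ G) N]
    (r : MonoidAlgebra ℤ G) (y : N) : (2 : ℤ) • (r • y) = r • ((2 : ℤ) • y) := by
  rw [two_zsmul, two_zsmul, smul_add]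

lemma coinv_div (H : Subgroup G) {N : Type} [AddCommGroup N] [Module (MonoidAlgebra ℤ G) N]
    (h2N : Function.Bijective (fun n : N => (2 : ℤ) • n)) :
    ∀ t ∈ coinvSub G H N, ∃ t' ∈ coinvSub G H N, (2 : ℤ) • t' = t := by
  intro t ht
  rw [coinvSub] at ht
  induction ht using Submodule.span_induction with
  | mem x hxs =>
      obtain ⟨h, hh, m, rfl⟩ := hxs
      obtain ⟨m', hm'⟩ := h2N.2 m
      refine ⟨MonoidAlgebra.of ℤ G h • m' - m',
        Submodule.subset_span ⟨h, hh, m', rfl⟩, ?_⟩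
      rw [smul_sub, smul_two_comm]
      have hm'' : (2 : ℤ) • m' = m := hm'
      rw [hm'']
  | zero => exact ⟨0, Submodule.zero_mem _, smul_zero _⟩
  | add x y hx hy ihx ihy =>
      obtain ⟨x', hx', hx2⟩ := ihx
      obtain ⟨y', hy', hy2⟩ := ihy
      exact ⟨x' + y', Submodule.add_mem _ hx' hy', by rw [smul_add, hx2, hy2]⟩
  | smul r x hx ih =>
      obtain ⟨x', hx', hx2⟩ := ih
      refine ⟨r • x', Submodule.smul_mem _ r hx', ?_⟩
      rw [smul_two_comm, hx2]

lemma coinv_le_chSub (H : Subgroup G) (χ : G →* ℤˣ) (hχH : ∀ h ∈ H, χ h = 1)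
    {N : Type} [AddCommGroup N] [Module (MonoidAlgebra ℤ G) N] :
    coinvSub G H N ≤ chSub G χ N := by
  rw [coinvSub, Submodule.span_le]
  rintro x ⟨h, hh, n, rfl⟩
  refine Submodule.subset_span ⟨h, n, ?_⟩
  rw [hχH h hh]
  norm_num

end aux

/-- character-theoretic local-global principle.  If `G` is an abelian group
of exponent `2`, `H ≤ G`, and `f : M → N` is a map of `ℤ[G]`-modules on which `2` acts
bijectively such that `f_χ : M_χ → N_χ` is an isomorphism for every character
`χ : G → {±1}` trivial on `H`, then the induced map `M_H → N_H` on `H`-coinvariants is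
an isomorphism. -/
theorem stmt15 (G : Type) [CommGroup G] (hG : ∀ g : G, g ^ 2 = 1) (H : Subgroup G)
    (M N : Type) [AddCommGroup M] [AddCommGroup N]
    [Module (MonoidAlgebra ℤ G) M] [Module (MonoidAlgebra ℤ G) N]
    (h2M : Function.Bijective (fun m : M => (2 : ℤ) • m))
    (h2N : Function.Bijective (fun n : N => (2 : ℤ) • n))
    (f : M →ₗ[MonoidAlgebra ℤ G] N)
    (hχ : ∀ χ : G →* ℤˣ, (∀ h ∈ H, χ h = 1) →
      Function.Bijective (Submodule.mapQ (chSub G χ M) (chSub G χ N) f (chSub_le χ f))) :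
    Function.Bijective
      (Submodule.mapQ (coinvSub G H M) (coinvSub G H N) f (coinvSub_le H f)) := by
  constructor
  · -- injectivity
    apply (injective_iff_map_eq_zero _).mpr
    intro x hx
    obtain ⟨m, rfl⟩ := Submodule.Quotient.mk_surjective _ x
    rw [Submodule.mapQ_apply, Submodule.Quotient.mk_eq_zero] at hx
    rw [Submodule.Quotient.mk_eq_zero]
    set A : Ideal (MonoidAlgebra ℤ G) :=
      (coinvSub G H M).comap (LinearMap.toSpanSingleton (MonoidAlgebra ℤ G) M m) with hA
    have hmemA : ∀ r : MonoidAlgebra ℤ G, r ∈ A ↔ r • m ∈ coinvSub G H M := by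
      intro r
      rw [hA, Submodule.mem_comap, LinearMap.toSpanSingleton_apply]
    have hH' : ∀ h ∈ H, MonoidAlgebra.of ℤ G h - 1 ∈ A := by
      intro h hh
      rw [hmemA, sub_smul, one_smul]
      exact Submodule.subset_span ⟨h, hh, m, rfl⟩
    have hv : ∀ χ : G →* ℤˣ, (∀ h ∈ H, χ h = 1) →
        ∃ v ∈ A, ∃ n : ℕ, chLift χ v ∣ 2 ^ n := by
      intro χ hχH
      have h1 : f m ∈ chSub G χ N := coinv_le_chSub H χ hχH hx
      have h2' : (Submodule.mapQ (chSub G χ M) (chSub G χ N) f (chSub_le χ f))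
          (Submodule.Quotient.mk m) = 0 := by
        rw [Submodule.mapQ_apply, Submodule.Quotient.mk_eq_zero]
        exact h1
      have h3 : (Submodule.Quotient.mk m : M ⧸ chSub G χ M) = 0 := by
        apply (hχ χ hχH).1
        rw [h2', map_zero]
      rw [Submodule.Quotient.mk_eq_zero] at h3
      obtain ⟨v, hv0, n, hvd⟩ := exists_ann hG χ h3
      exact ⟨v, (hmemA v).mpr (by rw [hv0]; exact Submodule.zero_mem _), n, hvd⟩
    obtain ⟨n, hn⟩ := keyIdeal hG H A hH' hv
    rw [hmemA] at hn
    rw [show (2 : MonoidAlgebra ℤ G) ^ n = (((2 : ℤ) ^ n : ℤ) : MonoidAlgebra ℤ G) by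
      push_cast; ring, Int.cast_smul_eq_zsmul] at hn
    exact sat_pow h2M (coinvSub G H M) (coinv_div H h2M) n m hn
  · -- surjectivity
    intro y
    obtain ⟨z, rfl⟩ := Submodule.Quotient.mk_surjective _ y
    set T : Submodule (MonoidAlgebra ℤ G) N := coinvSub G H N ⊔ LinearMap.range f with hT
    have hdivT : ∀ t ∈ T, ∃ t' ∈ T, (2 : ℤ) • t' = t := by
      intro t ht
      rw [hT, Submodule.mem_sup] at ht
      obtain ⟨a, ha, b, hb, rfl⟩ := ht
      obtain ⟨a', ha', ha2⟩ := coinv_div H h2N a ha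
      obtain ⟨x, rfl⟩ := hb
      obtain ⟨x', hx'⟩ := h2M.2 x
      have hx2 : (2 : ℤ) • x' = x := hx'
      refine ⟨a' + f x', ?_, ?_⟩
      · exact Submodule.add_mem _ (Submodule.mem_sup_left ha')
          (Submodule.mem_sup_right ⟨x', rfl⟩)
      · rw [smul_add, ha2, ← map_zsmul f, hx2]
    have hzT : z ∈ T := by
      set A : Ideal (MonoidAlgebra ℤ G) :=
        T.comap (LinearMap.toSpanSingleton (MonoidAlgebra ℤ G) N z) with hA
      have hmemA : ∀ r : MonoidAlgebra ℤ G, r ∈ A ↔ r • z ∈ T := by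
        intro r
        rw [hA, Submodule.mem_comap, LinearMap.toSpanSingleton_apply]
      have hH' : ∀ h ∈ H, MonoidAlgebra.of ℤ G h - 1 ∈ A := by
        intro h hh
        rw [hmemA, sub_smul, one_smul]
        exact Submodule.mem_sup_left (Submodule.subset_span ⟨h, hh, z, rfl⟩)
      have hv : ∀ χ : G →* ℤˣ, (∀ h ∈ H, χ h = 1) →
          ∃ v ∈ A, ∃ n : ℕ, chLift χ v ∣ 2 ^ n := by
        intro χ hχH
        obtain ⟨w, hw⟩ := (hχ χ hχH).2 (Submodule.Quotient.mk z)
        obtain ⟨x, rfl⟩ := Submodule.Quotient.mk_surjective _ w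
        rw [Submodule.mapQ_apply] at hw
        have hmem : z - f x ∈ chSub G χ N := by
          have := (Submodule.Quotient.eq (chSub G χ N)).mp hw
          simpa using Submodule.neg_mem _ this
        obtain ⟨v, hv0, n, hvd⟩ := exists_ann hG χ hmem
        have hvz : v • z ∈ T := by
          have heq : v • z = f (v • x) := by
            rw [smul_sub, sub_eq_zero] at hv0
            rw [hv0, map_smul]
          rw [heq]
          exact Submodule.mem_sup_right ⟨v • x, rfl⟩
        exact ⟨v, (hmemA v).mpr hvz, n, hvd⟩
      obtain ⟨n, hn⟩ := keyIdeal hG H A hH' hv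
      rw [hmemA] at hn
      rw [show (2 : MonoidAlgebra ℤ G) ^ n = (((2 : ℤ) ^ n : ℤ) : MonoidAlgebra ℤ G) by
        push_cast; ring, Int.cast_smul_eq_zsmul] at hn
      exact sat_pow h2N T hdivT n z hn
    rw [hT, Submodule.mem_sup] at hzT
    obtain ⟨a, ha, b, hb, hab⟩ := hzT
    obtain ⟨x, rfl⟩ := hb
    refine ⟨Submodule.Quotient.mk x, ?_⟩
    rw [Submodule.mapQ_apply, Submodule.Quotient.eq]
    have : f x - z = -a := by rw [← hab]; abel
    rw [this]
    exact Submodule.neg_mem _ ha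
end
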